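/- Correctness of the greedy refinement in the attribute-sparse regime (Proposition 4). Fix a constant ε>0 and consider parameter sequences satisfying, as n→∞: n·ρ_u²=ω(log n); n·q_u·(q_u+ρ_u(1−q_u))≥(1+ε)·log n; and ρ_u(1−q_u)/q_u≥ε. Let (G_1,G_2')∼G(n,q_u,ρ_u;m,q_a,ρ_a) with underlying permutation π*, and let π̂ be any (possibly graph-dependent) map from a set I⊆[n] to [n] such that π̂=π*|_I and |I|≥(1−ε/16)n. Let γ_1 be the unique solution in (1,∞) of f(γ_1)=3·log n/((n−2)·q_u²). Then with high probability, every run of the following procedure terminates with π̃=π*: initialize J:=I and π̃:=π̂; while there exist i∉J and j∉π̃(J) with N^u_{π̃}(i,j)≥γ_1·(n−2)·q_u², pick such a pair, set π̃(i):=j and J:=J∪{i}; output π̃. -/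

import Mathlib

open MeasureTheory ProbabilityTheory Filter Finset

/-- A pair of `{0,1}`-valued random variables whose joint law is the
correlated Bernoulli`(q, ρ)` law. -/
def IsCorrBern {Ω : Type*} [MeasurableSpace Ω] (P : Measure Ω)
    (X Y : Ω → ℝ) (q ρ : ℝ) : Prop :=
  Measurable X ∧ Measurable Y ∧
  (∀ ω, X ω = 0 ∨ X ω = 1) ∧ (∀ ω, Y ω = 0 ∨ Y ω = 1) ∧
  P {ω | X ω = 1 ∧ Y ω = 1} = ENNReal.ofReal (q ^ 2 + ρ * q * (1 - q)) ∧
  P {ω | X ω = 1 ∧ Y ω = 0} = ENNReal.ofReal (q * (1 - q) * (1 - ρ)) ∧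
  P {ω | X ω = 0 ∧ Y ω = 1} = ENNReal.ofReal (q * (1 - q) * (1 - ρ)) ∧
  P {ω | X ω = 0 ∧ Y ω = 0} = ENNReal.ofReal ((1 - q) ^ 2 + ρ * q * (1 - q))

/-- The edge indicators of the pair of attributed graphs `(G₁, G₂')` on `n` user
vertices and `m` attribute vertices:  `Au`/`Aa` are the user–user/user–attribute
edge indicators of `G₁`, and `Bu`/`Ba` those of `G₂'`. -/
structure GraphPair (Ω : Type*) (n m : ℕ) where
  Au : Sym2 (Fin n) → Ω → ℝ
  Aa : Fin n × Fin m → Ω → ℝ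
  Bu : Sym2 (Fin n) → Ω → ℝ
  Ba : Fin n × Fin m → Ω → ℝ

/-- The attributed Erdős–Rényi graph pair model `G(n,q_u,ρ_u;m,q_a,ρ_a)` with underlying
permutation `π`: each user–user pair of indicators is a correlated Bernoulli`(q_u,ρ_u)`
pair, each user–attribute pair is a correlated Bernoulli`(q_a,ρ_a)` pair, and all these
pairs are mutually independent. -/
def GraphPair.IsAttrER {Ω : Type*} [MeasurableSpace Ω] {n m : ℕ}
    (G : GraphPair Ω n m) (P : Measure Ω) (π : Equiv.Perm (Fin n))
    (qu ρu qa ρa : ℝ) : Prop :=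
  IsProbabilityMeasure P ∧
  (∀ e : Sym2 (Fin n), ¬ e.IsDiag → IsCorrBern P (G.Au e) (G.Bu (Sym2.map π e)) qu ρu) ∧
  (∀ p : Fin n × Fin m, IsCorrBern P (G.Aa p) (G.Ba (π p.1, p.2)) qa ρa) ∧
  iIndepFun
    (Sum.elim
      (fun e : {e : Sym2 (Fin n) // ¬ e.IsDiag} =>
        fun ω => (G.Au e.1 ω, G.Bu (Sym2.map π e.1) ω))
      (fun p : Fin n × Fin m => fun ω => (G.Aa p ω, G.Ba (π p.1, p.2) ω))) P

open scoped Classical in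
/-- `N^u_π(i,j)` for the partial map `g` with domain `J`: the number of users `u ∈ J`
with `(i,u)` an edge of `G₁` and `(j, g(u))` an edge of `G₂'`. -/
noncomputable def NuJ {Ω : Type*} {n m : ℕ} (G : GraphPair Ω n m) (ω : Ω)
    (J : Finset (Fin n)) (g : Fin n → Fin n) (i j : Fin n) : ℕ :=
  (J.filter (fun u => u ≠ i ∧ G.Au s(i, u) ω = 1 ∧ g u ≠ j ∧ G.Bu s(j, g u) ω = 1)).card

/-- One step of the greedy refinement procedure (Algorithm 2): a state is a pair
`(J, π̃)`; a step picks `i ∉ J` and `j ∉ π̃(J)` with `N^u_{π̃}(i,j)` at least the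
threshold, and sets `π̃(i) := j`, `J := J ∪ {i}`. -/
def StepSparse {Ω : Type*} {n m : ℕ} (G : GraphPair Ω n m) (ω : Ω) (thr : ℝ)
    (st st' : Finset (Fin n) × (Fin n → Fin n)) : Prop :=
  ∃ i j : Fin n, i ∉ st.1 ∧ (∀ u ∈ st.1, st.2 u ≠ j) ∧
    thr ≤ (NuJ G ω st.1 st.2 i j : ℝ) ∧
    st'.1 = insert i st.1 ∧ st'.2 = Function.update st.2 i j


set_option maxHeartbeats 2000000
open scoped ENNReal

noncomputable def fln (x : ℝ) : ℝ := x * Real.log x - x + 1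

lemma fln_strictMonoOn : StrictMonoOn fln (Set.Ici 1) := by
  have hderiv : ∀ x ∈ interior (Set.Ici (1:ℝ)), 0 < deriv fln x := by
    intro x hx
    rw [interior_Ici] at hx
    have hx1 : (1:ℝ) < x := hx
    have hx0 : x ≠ 0 := by linarith
    have h1 : HasDerivAt fln (Real.log x) x := by
      have h2 : HasDerivAt (fun y : ℝ => y * Real.log y) (1 * Real.log x + x * x⁻¹) x :=
        (hasDerivAt_id x).mul (Real.hasDerivAt_log hx0)
      have h3 : HasDerivAt (fun y : ℝ => y * Real.log y - y + 1)
          (1 * Real.log x + x * x⁻¹ - 1) x := ((h2.sub (hasDerivAt_id x)).add_const 1)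
      convert h3 using 1
      · rfl
      · rw [mul_inv_cancel₀ hx0]; ring
    rw [h1.deriv]
    exact Real.log_pos hx1
  refine strictMonoOn_of_deriv_pos (convex_Ici 1) ?_ hderiv
  have : ContinuousOn (fun x : ℝ => x * Real.log x - x + 1) (Set.Ici 1) := by
    refine ContinuousOn.add (ContinuousOn.sub ?_ continuousOn_id) continuousOn_const
    exact continuousOn_id.mul (Real.continuousOn_log.mono (by
      intro x hx; simp only [Set.mem_compl_iff, Set.mem_singleton_iff]
      have : (1:ℝ) ≤ x := hx; intro h; simp [h] at this; linarith))
  exact this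

lemma fln_one : fln 1 = 0 := by simp [fln]

lemma fln_pos {x : ℝ} (hx : 1 < x) : 0 < fln x := by
  have := fln_strictMonoOn (Set.self_mem_Ici) (le_of_lt hx) hx
  rwa [fln_one] at this

lemma fln_le_imp {x y : ℝ} (hy : 1 ≤ y) (hx : 1 < x) (h : fln x ≤ fln y) : x ≤ y := by
  by_contra hlt
  push_neg at hlt
  exact absurd h (not_le.mpr (fln_strictMonoOn hy (le_of_lt (lt_of_le_of_lt hy hlt)) hlt))

noncomputable def Cc (ε : ℝ) : ℝ := max (3 / fln (1+ε/16)) (max (128*(1+ε/4)/(3*ε^2)) 1)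
noncomputable def Rs (ε : ℝ) : ℝ := Real.exp (max 4 ((100/ε)*Real.log (7/ε)))

lemma numB1 {ε:ℝ} (hε : 0<ε) (hε2 : ε≤2) : 1+ε/4 ≤ (1+13*ε/16)*(1-ε/7-ε/40) := by
  nlinarith

lemma numB2 {ε:ℝ} (hε : 0<ε) (hε2 : ε≤2) : (1+ε/4) + 3*ε/25 ≤ (1+13*ε/16)*(1-ε/7) := by
  nlinarith

lemma lemA {ε L b t m0 R γ1 : ℝ} (hε : 0 < ε) (hε2 : ε ≤ 2)
    (hL : 1 ≤ L) (hb : 0 < b) (hγ1 : 1 < γ1)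
    (heq : fln γ1 * b = 3 * L) (ht : t = γ1 * b)
    (hm1 : (1 + 13*ε/16) * L ≤ m0) (hm2 : (1-ε/16) * (R*b) ≤ m0)
    (hR : 1 + ε ≤ R)
    (hcase : Cc ε * L ≤ b ∨ Rs ε ≤ R) :
    ∃ δ : ℝ, 0 < δ ∧ δ ≤ 1 ∧ (1+ε/4)*L ≤ t * Real.log δ + m0 * (1-δ) := by
  have ht0 : 0 < t := by rw [ht]; positivity
  have hfγ : 0 < fln γ1 := fln_pos hγ1
  rcases hcase with hA | hB
  · -- Case A : dense regime
    have hC3 : 3 / fln (1+ε/16) ≤ Cc ε := le_max_left _ _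
    have hC128 : 128*(1+ε/4)/(3*ε^2) ≤ Cc ε := le_trans (le_max_left _ _) (le_max_right _ _)
    have hC1 : (1:ℝ) ≤ Cc ε := le_trans (le_max_right _ _) (le_max_right _ _)
    have hf16 : 0 < fln (1+ε/16) := fln_pos (by linarith)
    have hCpos : 0 < Cc ε := by linarith
    have hCf : 3 ≤ Cc ε * fln (1+ε/16) := by
      rw [div_le_iff₀ hf16] at hC3; linarith
    -- γ1 ≤ 1 + ε/16
    have hγub : γ1 ≤ 1 + ε/16 := by
      apply fln_le_imp (by linarith) hγ1
      have h1 : fln γ1 * (Cc ε * L) ≤ 3 * L := by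
        rw [← heq]; exact mul_le_mul_of_nonneg_left hA (le_of_lt hfγ)
      have h2 : fln γ1 * Cc ε ≤ 3 := by nlinarith
      nlinarith [mul_pos hCpos hf16]
    have hbC : (128*(1+ε/4)/(3*ε^2))*L ≤ b :=
      le_trans (mul_le_mul_of_nonneg_right hC128 (by linarith)) hA
    have hfin : (1+ε/4)*L ≤ (3*ε^2/128) * b := by
      have h3 : (3*ε^2/128) * (128*(1+ε/4)/(3*ε^2)) = (1+ε/4) := by
        field_simp
      calc (1+ε/4)*L = (3*ε^2/128) * ((128*(1+ε/4)/(3*ε^2))*L) := by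
            rw [← mul_assoc, h3]
        _ ≤ (3*ε^2/128) * b := mul_le_mul_of_nonneg_left hbC (by positivity)
    clear hC3 hC128 hCf hbC hA hC1 hCpos hf16
    refine ⟨1 - ε/4, by linarith, by linarith, ?_⟩
    have hδpos : (0:ℝ) < 1 - ε/4 := by linarith
    obtain ⟨k, hk0, hkeq, hklog⟩ : ∃ k : ℝ, 0 ≤ k ∧ k*(1-ε/4) = ε/4 ∧
        -k ≤ Real.log (1 - ε/4) := by
      refine ⟨(ε/4)/(1-ε/4), by positivity, div_mul_cancel₀ _ (ne_of_gt hδpos), ?_⟩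
      have h1 := Real.log_le_sub_one_of_pos (inv_pos.mpr hδpos)
      rw [Real.log_inv] at h1
      have h2 : (1-ε/4)⁻¹ - 1 = (ε/4) / (1-ε/4) := by
        rw [inv_eq_one_div, div_sub_one (ne_of_gt hδpos)]
        congr 1; ring
      linarith
    have htub : t ≤ (1+ε/16)*b := by rw [ht]; nlinarith
    have hm2' : (1-ε/16)*(1+ε)*b ≤ m0 := by
      have h5 : (1-ε/16)*(1+ε)*b ≤ (1-ε/16)*(R*b) := by
        nlinarith [mul_nonneg (mul_nonneg (show (0:ℝ) ≤ 1-ε/16 by linarith) hb.le)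
          (sub_nonneg.mpr hR)]
      linarith
    have h1 : -((1+ε/16)*b*k) ≤ t * Real.log (1-ε/4) := by
      have ha : t*(-k) ≤ t * Real.log (1-ε/4) := mul_le_mul_of_nonneg_left hklog (le_of_lt ht0)
      have hbk : t*k ≤ (1+ε/16)*b*k := mul_le_mul_of_nonneg_right htub hk0
      nlinarith
    have hpoly : 3*ε/32 ≤ (1-ε/16)*(1+ε)*(1-ε/4) - (1+ε/16) := by
      nlinarith [mul_nonneg (sub_nonneg.mpr hε2) (show (0:ℝ) ≤ 17-ε by linarith), hε.le]
    have e1 : (3*ε^2/128)*b ≤ (1-ε/16)*(1+ε)*(ε/4)*b - (1+ε/16)*b*k := by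
      have hX : 0 ≤ ((1-ε/16)*(1+ε)*(ε/4)*b - (1+ε/16)*b*k - (3*ε^2/128)*b) * (1-ε/4) := by
        have hexp : ((1-ε/16)*(1+ε)*(ε/4)*b - (1+ε/16)*b*k - (3*ε^2/128)*b) * (1-ε/4)
            = ((1-ε/16)*(1+ε)*(ε/4)*(1-ε/4) - (1+ε/16)*(ε/4) - (3*ε^2/128)*(1-ε/4)) * b := by
          have hk2 : (1+ε/16)*b*(k*(1-ε/4)) = (1+ε/16)*b*(ε/4) := by rw [hkeq]
          linear_combination -hk2
        rw [hexp]
        have hbr : 0 ≤ (1-ε/16)*(1+ε)*(ε/4)*(1-ε/4) - (1+ε/16)*(ε/4) - (3*ε^2/128)*(1-ε/4) := by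
          nlinarith [mul_le_mul_of_nonneg_left hpoly (show (0:ℝ) ≤ ε/4 by linarith)]
        exact mul_nonneg hbr (le_of_lt hb)
      have := (mul_nonneg_iff_of_pos_right hδpos).mp hX
      linarith
    have e2 : (1-ε/16)*(1+ε)*(ε/4)*b ≤ m0 * (ε/4) := by
      have h6 := mul_le_mul_of_nonneg_right hm2' (show (0:ℝ) ≤ ε/4 by linarith)
      linarith [h6]
    have hrw : m0 * (1 - (1-ε/4)) = m0 * (ε/4) := by ring_nf
    linarith
  · -- Case B : R large
    have hRpos : 0 < R := lt_of_lt_of_le (Real.exp_pos _) hB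
    have hlogR : max 4 ((100/ε)*Real.log (7/ε)) ≤ Real.log R := by
      rw [show max 4 ((100/ε)*Real.log (7/ε)) = Real.log (Rs ε) from (Real.log_exp _).symm]
      exact Real.log_le_log (Real.exp_pos _) hB
    have hlogR4 : 4 ≤ Real.log R := le_trans (le_max_left _ _) hlogR
    have hlogR7 : (100/ε)*Real.log (7/ε) ≤ Real.log R := le_trans (le_max_right _ _) hlogR
    obtain ⟨δ, hδpos, hδ1, hlogδ, hδε7⟩ : ∃ δ:ℝ, 0 < δ ∧ δ ≤ 1 ∧
        Real.log δ = -(ε/100)*Real.log R ∧ δ ≤ ε/7 := by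
      refine ⟨Real.exp (-(ε/100)*Real.log R), Real.exp_pos _, ?_, Real.log_exp _, ?_⟩
      · rw [show (1:ℝ) = Real.exp 0 by simp]
        apply Real.exp_le_exp.mpr
        have h0 := mul_nonneg (show (0:ℝ) ≤ ε/100 by positivity)
          (show (0:ℝ) ≤ Real.log R by linarith)
        linarith
      · have h1 : -(ε/100)*Real.log R ≤ -Real.log (7/ε) := by
          have h2 := mul_le_mul_of_nonneg_left hlogR7 (show (0:ℝ) ≤ ε/100 by positivity)
          have he : (ε/100) * ((100/ε)*Real.log (7/ε)) = Real.log (7/ε) := by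
            field_simp
          linarith
        calc Real.exp (-(ε/100)*Real.log R) ≤ Real.exp (-Real.log (7/ε)) :=
              Real.exp_le_exp.mpr h1
          _ = ε/7 := by rw [Real.exp_neg, Real.exp_log (by positivity), inv_div]
    refine ⟨δ, hδpos, hδ1, ?_⟩
    have hm0pos : 0 < m0 :=
      lt_of_lt_of_le (mul_pos (by linarith) (show (0:ℝ) < L by linarith)) hm1
    have hmδ : m0*(1-ε/7) ≤ m0*(1-δ) := by
      have := mul_nonneg hm0pos.le (sub_nonneg.mpr hδε7)
      nlinarith
    have hL0 : (0:ℝ) ≤ L := by linarith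
    obtain ⟨sR, hsR0, hsRsq, hlogsR⟩ : ∃ s:ℝ, 0 < s ∧ s^2 = R ∧
        Real.log s = Real.log R / 2 :=
      ⟨Real.sqrt R, Real.sqrt_pos.mpr hRpos, Real.sq_sqrt (le_of_lt hRpos),
        Real.log_sqrt (le_of_lt hRpos)⟩
    by_cases hγsR : γ1 ≤ sR
    · -- B1
      have htub : t ≤ sR * b := by
        rw [ht]; exact mul_le_mul_of_nonneg_right hγsR hb.le
      have hlogRsR : Real.log R ≤ 2*sR := by
        have := Real.log_le_sub_one_of_pos hsR0
        linarith
      have hRb : (7/8)*(R*b) ≤ m0 := by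
        have h0 : (7/8)*(R*b) ≤ (1-ε/16)*(R*b) := by
          have h9 := mul_nonneg (show (0:ℝ) ≤ 1/8-ε/16 by linarith) (mul_pos hRpos hb).le
          linarith
        linarith
      have hneg : -(t * Real.log δ) ≤ (ε/40) * m0 := by
        have h2 : -(t*Real.log δ) = t * ((ε/100)*Real.log R) := by rw [hlogδ]; ring
        have h3 : t * ((ε/100)*Real.log R) ≤ sR*b*((ε/100)*(2*sR)) := by
          have hε100 : 0 ≤ (ε/100)*Real.log R := by positivity
          have := mul_le_mul htub (mul_le_mul_of_nonneg_left hlogRsR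
            (show (0:ℝ) ≤ ε/100 by positivity)) hε100 (by positivity)
          linarith
        have h4 : sR*b*((ε/100)*(2*sR)) = (ε/50)*(R*b) := by
          rw [← hsRsq]; ring
        have h6 : R*b ≤ (8/7)*m0 := by linarith
        have h5 : (ε/50)*(R*b) ≤ (ε/50)*((8/7)*m0) :=
          mul_le_mul_of_nonneg_left h6 (by positivity)
        have h7 := mul_nonneg hε.le hm0pos.le
        linarith
      have hgoal : (1+ε/4)*L ≤ m0*(1-ε/7) - (ε/40)*m0 := by
        have hnum : 1+ε/4 ≤ (1+13*ε/16)*(1-ε/7-ε/40) := numB1 hε hε2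
        have hpos : (0:ℝ) ≤ 1-ε/7-ε/40 := by linarith
        have hL1 : (1+ε/4)*L ≤ ((1+13*ε/16)*(1-ε/7-ε/40))*L :=
          mul_le_mul_of_nonneg_right hnum hL0
        have hL2 : ((1+13*ε/16)*L)*(1-ε/7-ε/40) ≤ m0*(1-ε/7-ε/40) :=
          mul_le_mul_of_nonneg_right hm1 hpos
        nlinarith
      linarith
    · -- B2
      push_neg at hγsR
      have hlogγ : 2 ≤ Real.log γ1 := by
        have h1 : Real.log sR ≤ Real.log γ1 := Real.log_le_log hsR0 (le_of_lt hγsR)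
        rw [hlogsR] at h1; linarith
      have hγ0 : (0:ℝ) < γ1 := by linarith
      have hflb : γ1 * Real.log γ1 / 2 ≤ fln γ1 := by
        unfold fln
        have := mul_nonneg hγ0.le (sub_nonneg.mpr hlogγ)
        nlinarith
      have hup : t * Real.log γ1 ≤ 6*L := by
        have h7 : (γ1 * Real.log γ1 / 2) * b ≤ 3*L := by
          rw [← heq]; exact mul_le_mul_of_nonneg_right hflb (le_of_lt hb)
        rw [ht]; nlinarith
      have hneg : -(t*Real.log δ) ≤ (3*ε/25)*L := by
        have h2 : -(t*Real.log δ) = (ε/100)*(t*Real.log R) := by rw [hlogδ]; ring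
        have h3 : Real.log R ≤ 2*Real.log γ1 := by
          have h8 : Real.log sR ≤ Real.log γ1 := Real.log_le_log hsR0 (le_of_lt hγsR)
          rw [hlogsR] at h8; linarith
        have h4 : t*Real.log R ≤ t*(2*Real.log γ1) :=
          mul_le_mul_of_nonneg_left h3 ht0.le
        have h5 := mul_le_mul_of_nonneg_left h4 (show (0:ℝ) ≤ ε/100 by positivity)
        have h6 := mul_le_mul_of_nonneg_left hup (show (0:ℝ) ≤ ε/50 by positivity)
        nlinarith
      have hgoal : (1+ε/4)*L + (3*ε/25)*L ≤ m0*(1-ε/7) := by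
        have hnum : (1+ε/4) + 3*ε/25 ≤ (1+13*ε/16)*(1-ε/7) := numB2 hε hε2
        have hpos : (0:ℝ) ≤ 1-ε/7 := by linarith
        have hL1 : ((1+ε/4) + 3*ε/25)*L ≤ ((1+13*ε/16)*(1-ε/7))*L :=
          mul_le_mul_of_nonneg_right hnum hL0
        have hL2 : ((1+13*ε/16)*L)*(1-ε/7) ≤ m0*(1-ε/7) :=
          mul_le_mul_of_nonneg_right hm1 hpos
        nlinarith
      linarith

section CorrBern
variable {Ω : Type*} [MeasurableSpace Ω] {P : Measure Ω} {X Y : Ω → ℝ} {q ρ : ℝ}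

lemma IsCorrBern.partition (h : IsCorrBern P X Y q ρ) [IsProbabilityMeasure P] :
    P {ω | X ω = 1 ∧ Y ω = 1} + P {ω | X ω = 1 ∧ Y ω = 0}
      + (P {ω | X ω = 0 ∧ Y ω = 1} + P {ω | X ω = 0 ∧ Y ω = 0}) = 1 := by
  obtain ⟨mX, mY, vX, vY, _, _, _, _⟩ := h
  have m11 : MeasurableSet {ω | X ω = 1 ∧ Y ω = 1} :=
    (mX (measurableSet_singleton 1)).inter (mY (measurableSet_singleton 1))
  have m10 : MeasurableSet {ω | X ω = 1 ∧ Y ω = 0} :=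
    (mX (measurableSet_singleton 1)).inter (mY (measurableSet_singleton 0))
  have m01 : MeasurableSet {ω | X ω = 0 ∧ Y ω = 1} :=
    (mX (measurableSet_singleton 0)).inter (mY (measurableSet_singleton 1))
  have m00 : MeasurableSet {ω | X ω = 0 ∧ Y ω = 0} :=
    (mX (measurableSet_singleton 0)).inter (mY (measurableSet_singleton 0))
  have h1 : P {ω | X ω = 1 ∧ Y ω = 1} + P {ω | X ω = 1 ∧ Y ω = 0} = P {ω | X ω = 1} := by
    rw [← measure_union ?_ m10]
    · congr 1; ext ω; simp only [Set.mem_union, Set.mem_setOf_eq]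
      constructor
      · rintro (⟨h1, _⟩ | ⟨h1, _⟩) <;> exact h1
      · intro h1; rcases vY ω with h2 | h2
        · right; exact ⟨h1, h2⟩
        · left; exact ⟨h1, h2⟩
    · rw [Set.disjoint_iff]; rintro ω ⟨⟨_, h1⟩, ⟨_, h2⟩⟩; rw [h1] at h2; norm_num at h2
  have h0 : P {ω | X ω = 0 ∧ Y ω = 1} + P {ω | X ω = 0 ∧ Y ω = 0} = P {ω | X ω = 0} := by
    rw [← measure_union ?_ m00]
    · congr 1; ext ω; simp only [Set.mem_union, Set.mem_setOf_eq]
      constructor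
      · rintro (⟨h1, _⟩ | ⟨h1, _⟩) <;> exact h1
      · intro h1; rcases vY ω with h2 | h2
        · right; exact ⟨h1, h2⟩
        · left; exact ⟨h1, h2⟩
    · rw [Set.disjoint_iff]; rintro ω ⟨⟨_, h1⟩, ⟨_, h2⟩⟩; rw [h1] at h2; norm_num at h2
  have mX0 : MeasurableSet {ω | X ω = 0} := mX (measurableSet_singleton 0)
  rw [h1, h0, ← measure_union ?_ mX0]
  · rw [show {ω | X ω = 1} ∪ {ω | X ω = 0} = Set.univ from ?_, measure_univ]
    ext ω; simp only [Set.mem_union, Set.mem_setOf_eq, Set.mem_univ, iff_true]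
    exact (vX ω).symm
  · rw [Set.disjoint_iff]; rintro ω ⟨h1, h2⟩
    simp only [Set.mem_setOf_eq] at h1 h2; rw [h1] at h2; norm_num at h2

lemma corrBern_range (h : IsCorrBern P X Y q ρ) [IsProbabilityMeasure P]
    (hq0 : q ≠ 0) (hρq : 0 < ρ * (1 - q) / q) :
    0 < q ∧ q < 1 ∧ 0 < ρ ∧ ρ ≤ 1 := by
  have hpart := h.partition
  have hv11le : q ^ 2 + ρ * q * (1 - q) ≤ 1 := by
    rw [← ENNReal.ofReal_le_one, ← h.2.2.2.2.1]; exact prob_le_one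
  -- helper for contradictions when the middle term is negative
  have key : ¬ (q * (1 - q) * (1 - ρ) < 0 ∧ 0 ≤ q ^ 2 + ρ * q * (1 - q) ∧
      0 ≤ (1 - q) ^ 2 + ρ * q * (1 - q)) := by
    rintro ⟨hb, h11, h00⟩
    rw [h.2.2.2.2.1, h.2.2.2.2.2.1, h.2.2.2.2.2.2.1, h.2.2.2.2.2.2.2] at hpart
    rw [ENNReal.ofReal_eq_zero.mpr hb.le] at hpart
    rw [add_zero, zero_add, ← ENNReal.ofReal_add h11 h00] at hpart
    have : q ^ 2 + ρ * q * (1 - q) + ((1 - q) ^ 2 + ρ * q * (1 - q)) ≤ 1 := by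
      rw [← ENNReal.ofReal_le_one, hpart]
    nlinarith
  have hqnlt : ¬ q < 0 := by
    intro hq
    have h1q : 0 < 1 - q := by linarith
    have hρneg : ρ < 0 := by
      rcases div_pos_iff.mp hρq with ⟨h1, h2⟩ | ⟨h1, h2⟩
      · linarith
      · nlinarith
    exact key ⟨by nlinarith, by nlinarith, by nlinarith⟩
  have hqngt : ¬ 1 < q := by
    intro hq
    have hq0' : (0:ℝ) < q := by linarith
    have hρneg : ρ < 0 := by
      rcases div_pos_iff.mp hρq with ⟨h1, h2⟩ | ⟨h1, h2⟩
      · nlinarith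
      · linarith
    nlinarith [mul_pos (mul_pos (neg_pos.mpr hρneg) hq0') (show (0:ℝ) < q - 1 by linarith)]
  push_neg at hqnlt hqngt
  have hqpos : 0 < q := lt_of_le_of_ne hqnlt (Ne.symm hq0)
  have hq1 : q < 1 := by
    rcases lt_or_eq_of_le hqngt with h1 | h1
    · exact h1
    · rw [h1] at hρq; norm_num at hρq
  have hρpos : 0 < ρ := by
    rcases div_pos_iff.mp hρq with ⟨h1, _⟩ | ⟨h1, h2⟩
    · nlinarith
    · nlinarith
  refine ⟨hqpos, hq1, hρpos, ?_⟩
  by_contra hρ1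
  push_neg at hρ1
  have hq1q : (0:ℝ) < q * (1 - q) := mul_pos hqpos (by linarith)
  have hρq1 : (0:ℝ) < ρ * q * (1 - q) := mul_pos (mul_pos hρpos hqpos) (by linarith)
  exact key ⟨by nlinarith, by nlinarith, by nlinarith⟩

lemma corrBern_margX (h : IsCorrBern P X Y q ρ)
    (hq0 : 0 ≤ q) (hq1 : q ≤ 1) (hρ0 : 0 ≤ ρ) (hρ1 : ρ ≤ 1) :
    P {ω | X ω = 1} = ENNReal.ofReal q := by
  obtain ⟨mX, mY, vX, vY, h11, h10, _, _⟩ := h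
  have m10 : MeasurableSet {ω | X ω = 1 ∧ Y ω = 0} :=
    (mX (measurableSet_singleton 1)).inter (mY (measurableSet_singleton 0))
  have hsplit : P {ω | X ω = 1} = P {ω | X ω = 1 ∧ Y ω = 1} + P {ω | X ω = 1 ∧ Y ω = 0} := by
    rw [← measure_union ?_ m10]
    · congr 1; ext ω; simp only [Set.mem_union, Set.mem_setOf_eq]
      constructor
      · intro h1; rcases vY ω with h2 | h2
        · right; exact ⟨h1, h2⟩
        · left; exact ⟨h1, h2⟩
      · rintro (⟨h1, _⟩ | ⟨h1, _⟩) <;> exact h1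
    · rw [Set.disjoint_iff]; rintro ω ⟨⟨_, h1⟩, ⟨_, h2⟩⟩; rw [h1] at h2; norm_num at h2
  rw [hsplit, h11, h10, ← ENNReal.ofReal_add
    (by nlinarith [mul_nonneg (mul_nonneg hρ0 hq0) (show (0:ℝ) ≤ 1-q by linarith)])
    (mul_nonneg (mul_nonneg hq0 (by linarith)) (by linarith))]
  congr 1; ring

lemma corrBern_margY (h : IsCorrBern P X Y q ρ)
    (hq0 : 0 ≤ q) (hq1 : q ≤ 1) (hρ0 : 0 ≤ ρ) (hρ1 : ρ ≤ 1) :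
    P {ω | Y ω = 1} = ENNReal.ofReal q := by
  obtain ⟨mX, mY, vX, vY, h11, _, h01, _⟩ := h
  have m01 : MeasurableSet {ω | X ω = 0 ∧ Y ω = 1} :=
    (mX (measurableSet_singleton 0)).inter (mY (measurableSet_singleton 1))
  have hsplit : P {ω | Y ω = 1} = P {ω | X ω = 1 ∧ Y ω = 1} + P {ω | X ω = 0 ∧ Y ω = 1} := by
    rw [← measure_union ?_ m01]
    · congr 1; ext ω; simp only [Set.mem_union, Set.mem_setOf_eq]
      constructor
      · intro h1; rcases vX ω with h2 | h2
        · right; exact ⟨h2, h1⟩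
        · left; exact ⟨h2, h1⟩
      · rintro (⟨_, h1⟩ | ⟨_, h1⟩) <;> exact h1
    · rw [Set.disjoint_iff]; rintro ω ⟨⟨h1, _⟩, ⟨h2, _⟩⟩; rw [h1] at h2; norm_num at h2
  rw [hsplit, h11, h01, ← ENNReal.ofReal_add
    (by nlinarith [mul_nonneg (mul_nonneg hρ0 hq0) (show (0:ℝ) ≤ 1-q by linarith)])
    (mul_nonneg (mul_nonneg hq0 (by linarith)) (by linarith))]
  congr 1; ring

end CorrBern

section Chernoff
variable {Ω : Type*} [MeasurableSpace Ω] {P : Measure Ω} [IsProbabilityMeasure P]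
variable {κ : Type*}

lemma integral_prod01 (T : Finset κ) (W : κ → Ω → ℝ)
    (hmeas : ∀ u ∈ T, Measurable (W u)) (h01 : ∀ u ∈ T, ∀ ω, W u ω = 0 ∨ W u ω = 1) :
    ∫ ω, (∏ u ∈ T, W u ω) ∂P = (P (⋂ u ∈ T, {ω | W u ω = 1})).toReal := by
  have hA : MeasurableSet (⋂ u ∈ T, {ω | W u ω = 1}) := by
    refine MeasurableSet.biInter T.countable_toSet fun u hu => ?_
    exact (hmeas u hu) (measurableSet_singleton 1)
  have hpt : ∀ ω, (∏ u ∈ T, W u ω)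
      = Set.indicator (⋂ u ∈ T, {ω | W u ω = 1}) (fun _ => (1:ℝ)) ω := by
    intro ω
    by_cases hω : ω ∈ ⋂ u ∈ T, {ω | W u ω = 1}
    · rw [Set.indicator_of_mem hω]
      simp only [Set.mem_iInter, Set.mem_setOf_eq] at hω
      exact Finset.prod_eq_one fun u hu => hω u hu
    · rw [Set.indicator_of_notMem hω]
      simp only [Set.mem_iInter, Set.mem_setOf_eq, not_forall] at hω
      obtain ⟨u, hu, hWu⟩ := hω
      refine Finset.prod_eq_zero hu ?_
      rcases h01 u hu ω with h | h
      · exact h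
      · exact absurd h hWu
  rw [show (fun ω => ∏ u ∈ T, W u ω) = fun ω =>
    Set.indicator (⋂ u ∈ T, {ω | W u ω = 1}) (fun _ => (1:ℝ)) ω from funext hpt]
  rw [integral_indicator_const (1:ℝ) hA]
  simp
  rfl

lemma chernoff_core (s : Finset κ) (W : κ → Ω → ℝ) (p θ c : ℝ)
    (hmeas : ∀ u ∈ s, Measurable (W u)) (h01 : ∀ u ∈ s, ∀ ω, W u ω = 0 ∨ W u ω = 1)
    (hp0 : 0 ≤ p) (hp1 : p ≤ 1)
    (hprod : ∀ T ∈ s.powerset, ∫ ω, (∏ u ∈ T, W u ω) ∂P = p ^ T.card) :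
    (0 ≤ θ → P {ω | c ≤ ∑ u ∈ s, W u ω} ≤
      ENNReal.ofReal (Real.exp (-(θ*c) + s.card * (p * (Real.exp θ - 1)))))
    ∧ (θ ≤ 0 → P {ω | (∑ u ∈ s, W u ω) ≤ c} ≤
      ENNReal.ofReal (Real.exp (-(θ*c) + s.card * (p * (Real.exp θ - 1))))) := by
  classical
  have hSmeas : Measurable (fun ω => ∑ u ∈ s, W u ω) := Finset.measurable_sum s hmeas
  have key : ∀ ω, Real.exp (θ * ∑ u ∈ s, W u ω)
      = ∏ u ∈ s, ((Real.exp θ - 1) * W u ω + 1) := by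
    intro ω
    rw [Finset.mul_sum, Real.exp_sum]
    refine Finset.prod_congr rfl fun u hu => ?_
    rcases h01 u hu ω with h | h <;> rw [h] <;> simp
  have hprodmeas : ∀ T ∈ s.powerset, Measurable (fun ω => ∏ u ∈ T, W u ω) := by
    intro T hT
    exact Finset.measurable_prod T fun u hu => hmeas u (Finset.mem_powerset.mp hT hu)
  have hint : ∀ T ∈ s.powerset, Integrable (fun ω => ∏ u ∈ T, W u ω) P := by
    intro T hT
    refine Integrable.mono' (integrable_const (1:ℝ))
      (hprodmeas T hT).aestronglyMeasurable (ae_of_all _ fun ω => ?_)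
    have h0 : 0 ≤ ∏ u ∈ T, W u ω := Finset.prod_nonneg fun u hu => by
      rcases h01 u (Finset.mem_powerset.mp hT hu) ω with h | h <;> rw [h] <;> norm_num
    have hle : ∏ u ∈ T, W u ω ≤ 1 := Finset.prod_le_one
      (fun u hu => by rcases h01 u (Finset.mem_powerset.mp hT hu) ω with h | h <;>
        rw [h] <;> norm_num)
      (fun u hu => by rcases h01 u (Finset.mem_powerset.mp hT hu) ω with h | h <;>
        rw [h] <;> norm_num)
    rw [Real.norm_eq_abs, abs_of_nonneg h0]; exact hle
  have hmgf : mgf (fun ω => ∑ u ∈ s, W u ω) P θ = (1 + p * (Real.exp θ - 1)) ^ s.card := by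
    unfold mgf
    rw [integral_congr_ae (ae_of_all _ key)]
    have hexpand : ∀ ω, ∏ u ∈ s, ((Real.exp θ - 1) * W u ω + 1)
        = ∑ T ∈ s.powerset, (Real.exp θ - 1) ^ T.card * ∏ u ∈ T, W u ω := by
      intro ω
      rw [Finset.prod_add]
      refine Finset.sum_congr rfl fun T hT => ?_
      rw [Finset.prod_const_one, mul_one, Finset.prod_mul_distrib, Finset.prod_const]
    rw [integral_congr_ae (ae_of_all _ hexpand)]
    rw [integral_finset_sum _ (fun T hT => ((hint T hT).const_mul _))]
    have hterm : ∀ T ∈ s.powerset, ∫ ω, (Real.exp θ - 1) ^ T.card * ∏ u ∈ T, W u ω ∂P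
        = ((Real.exp θ - 1) * p) ^ T.card := by
      intro T hT
      rw [integral_const_mul, hprod T hT, mul_pow]
    rw [Finset.sum_congr rfl hterm]
    have h2 := Finset.prod_add (fun _ : κ => (Real.exp θ - 1) * p) (fun _ : κ => (1:ℝ)) s
    simp only [Finset.prod_const, one_pow, mul_one] at h2
    rw [← h2]
    ring
  have hintexp : Integrable (fun ω => Real.exp (θ * ∑ u ∈ s, W u ω)) P := by
    refine Integrable.mono' (integrable_const ((1+|Real.exp θ - 1|)^s.card))
      (Real.measurable_exp.comp (hSmeas.const_mul θ)).aestronglyMeasurable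
      (ae_of_all _ fun ω => ?_)
    rw [Real.norm_eq_abs, key ω, Finset.abs_prod]
    refine le_trans (Finset.prod_le_prod (fun u hu => abs_nonneg _) (fun u hu =>
      show |(Real.exp θ - 1) * W u ω + 1| ≤ 1 + |Real.exp θ - 1| from ?_)) ?_
    · rcases h01 u hu ω with h | h <;> rw [h]
      · simp [abs_nonneg]
      · rw [mul_one]
        calc |Real.exp θ - 1 + 1| ≤ |Real.exp θ - 1| + |(1:ℝ)| := abs_add_le _ _
          _ = 1 + |Real.exp θ - 1| := by rw [abs_one]; ring
    · rw [Finset.prod_const]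
  have hc' : -1 ≤ Real.exp θ - 1 := by linarith [Real.exp_pos θ]
  have h0base : 0 ≤ 1 + p * (Real.exp θ - 1) := by
    have := mul_le_mul_of_nonneg_left hc' hp0
    nlinarith
  have h3 : (1 + p * (Real.exp θ - 1)) ^ s.card
      ≤ Real.exp (s.card * (p * (Real.exp θ - 1))) := by
    calc (1 + p * (Real.exp θ - 1)) ^ s.card
        ≤ (Real.exp (p * (Real.exp θ - 1))) ^ s.card :=
          pow_le_pow_left₀ h0base (by linarith [Real.add_one_le_exp (p * (Real.exp θ - 1))]) _
      _ = Real.exp (s.card * (p * (Real.exp θ - 1))) := by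
          rw [← Real.exp_nat_mul]
  constructor
  · intro hθ
    have h1 := measure_ge_le_exp_mul_mgf (X := fun ω => ∑ u ∈ s, W u ω) (μ := P)
      (t := θ) c hθ hintexp
    rw [hmgf] at h1
    calc P {ω | c ≤ ∑ u ∈ s, W u ω}
        = ENNReal.ofReal ((P {ω | c ≤ ∑ u ∈ s, W u ω}).toReal) :=
          (ENNReal.ofReal_toReal (measure_ne_top _ _)).symm
      _ ≤ ENNReal.ofReal (Real.exp (-(θ*c) + s.card * (p * (Real.exp θ - 1)))) := by
          apply ENNReal.ofReal_le_ofReal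
          calc (P {ω | c ≤ ∑ u ∈ s, W u ω}).toReal
              ≤ Real.exp (-θ * c) * (1 + p * (Real.exp θ - 1)) ^ s.card := h1
            _ ≤ Real.exp (-θ * c) * Real.exp (s.card * (p * (Real.exp θ - 1))) :=
                mul_le_mul_of_nonneg_left h3 (Real.exp_pos _).le
            _ = Real.exp (-(θ*c) + s.card * (p * (Real.exp θ - 1))) := by
                rw [← Real.exp_add]; ring_nf
  · intro hθ
    have h1 := measure_le_le_exp_mul_mgf (X := fun ω => ∑ u ∈ s, W u ω) (μ := P)
      (t := θ) c hθ hintexp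
    rw [hmgf] at h1
    calc P {ω | (∑ u ∈ s, W u ω) ≤ c}
        = ENNReal.ofReal ((P {ω | (∑ u ∈ s, W u ω) ≤ c}).toReal) :=
          (ENNReal.ofReal_toReal (measure_ne_top _ _)).symm
      _ ≤ ENNReal.ofReal (Real.exp (-(θ*c) + s.card * (p * (Real.exp θ - 1)))) := by
          apply ENNReal.ofReal_le_ofReal
          calc (P {ω | (∑ u ∈ s, W u ω) ≤ c}).toReal
              ≤ Real.exp (-θ * c) * (1 + p * (Real.exp θ - 1)) ^ s.card := h1
            _ ≤ Real.exp (-θ * c) * Real.exp (s.card * (p * (Real.exp θ - 1))) :=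
                mul_le_mul_of_nonneg_left h3 (Real.exp_pos _).le
            _ = Real.exp (-(θ*c) + s.card * (p * (Real.exp θ - 1))) := by
                rw [← Real.exp_add]; ring_nf

end Chernoff

section Model
variable {Ω : Type*} [MeasurableSpace Ω] {n m : ℕ} {G : GraphPair Ω n m}
  {P : Measure Ω} {π : Equiv.Perm (Fin n)} {qu ρu qa ρa : ℝ}

lemma joint_prob (hmodel : G.IsAttrER P π qu ρu qa ρa) {κ : Type*} (T : Finset κ)
    (e : κ → Sym2 (Fin n)) (hnd : ∀ u ∈ T, ¬ (e u).IsDiag) (hinj : Set.InjOn e T) :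
    P (⋂ u ∈ T, ({ω | G.Au (e u) ω = 1} ∩ {ω | G.Bu (Sym2.map π (e u)) ω = 1}))
      = ENNReal.ofReal (qu^2 + ρu*qu*(1-qu)) ^ T.card := by
  classical
  have hind := (iIndepFun_iff_measure_inter_preimage_eq_mul).mp hmodel.2.2.2
  set Zfam := (Sum.elim
      (fun e : {e : Sym2 (Fin n) // ¬ e.IsDiag} =>
        fun ω => (G.Au e.1 ω, G.Bu (Sym2.map π e.1) ω))
      (fun p : Fin n × Fin m => fun ω => (G.Aa p ω, G.Ba (π p.1, p.2) ω))) with hZfam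
  set g : {x // x ∈ T} → ({e : Sym2 (Fin n) // ¬ e.IsDiag} ⊕ (Fin n × Fin m)) :=
    (fun x => Sum.inl ⟨e x.1, hnd x.1 x.2⟩) with hg
  have hMset : MeasurableSet {p : ℝ × ℝ | p.1 = 1 ∧ p.2 = 1} :=
    (measurable_fst (measurableSet_singleton 1)).inter
      (measurable_snd (measurableSet_singleton 1))
  have hform := hind (T.attach.image g)
    (sets := fun _ => {p : ℝ × ℝ | p.1 = 1 ∧ p.2 = 1}) (fun i _ => hMset)
  have hginj : ∀ x ∈ T.attach, ∀ y ∈ T.attach, g x = g y → x = y := by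
    intro x _ y _ hxy
    rw [hg] at hxy
    simp only [Sum.inl.injEq, Subtype.mk.injEq] at hxy
    exact Subtype.ext (hinj x.2 y.2 hxy)
  have hsetEq : (⋂ i ∈ T.attach.image g, Zfam i ⁻¹' {p : ℝ × ℝ | p.1 = 1 ∧ p.2 = 1})
      = ⋂ u ∈ T, ({ω | G.Au (e u) ω = 1} ∩ {ω | G.Bu (Sym2.map π (e u)) ω = 1}) := by
    ext ω
    simp only [Set.mem_iInter, Finset.mem_image, Finset.mem_attach, true_and,
      Set.mem_inter_iff, Set.mem_setOf_eq, Set.mem_preimage, hZfam, hg, Sum.elim_inl,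
      forall_exists_index]
    constructor
    · intro h u hu
      exact h (Sum.inl ⟨e u, hnd u hu⟩) ⟨u, hu⟩ rfl
    · rintro h i x rfl
      exact h x.1 x.2
  have hprodEq : ∏ i ∈ T.attach.image g, P (Zfam i ⁻¹' {p : ℝ × ℝ | p.1 = 1 ∧ p.2 = 1})
      = ENNReal.ofReal (qu^2 + ρu*qu*(1-qu)) ^ T.card := by
    rw [Finset.prod_image hginj]
    have hfac : ∀ x : {x // x ∈ T},
        P (Zfam (g x) ⁻¹' {p : ℝ × ℝ | p.1 = 1 ∧ p.2 = 1})
          = ENNReal.ofReal (qu^2 + ρu*qu*(1-qu)) := by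
      intro x
      have hcb := hmodel.2.1 (e x.1) (hnd x.1 x.2)
      have : Zfam (g x) ⁻¹' {p : ℝ × ℝ | p.1 = 1 ∧ p.2 = 1}
          = {ω | G.Au (e x.1) ω = 1 ∧ G.Bu (Sym2.map π (e x.1)) ω = 1} := by
        rw [hZfam, hg]; rfl
      rw [this, hcb.2.2.2.2.1]
    rw [Finset.prod_congr rfl (fun x _ => hfac x), Finset.prod_const, Finset.card_attach]
  rw [← hsetEq, hform, hprodEq]

lemma cross_prob (hmodel : G.IsAttrER P π qu ρu qa ρa) {κ : Type*} (T : Finset κ)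
    (e1 e2 : κ → Sym2 (Fin n))
    (hnd1 : ∀ u ∈ T, ¬ (e1 u).IsDiag) (hnd2 : ∀ u ∈ T, ¬ (e2 u).IsDiag)
    (hinj1 : Set.InjOn e1 T) (hinj2 : Set.InjOn e2 T)
    (hdisj : ∀ u ∈ T, ∀ v ∈ T, e1 u ≠ e2 v)
    (hq0 : 0 ≤ qu) (hq1 : qu ≤ 1) (hρ0 : 0 ≤ ρu) (hρ1 : ρu ≤ 1) :
    P (⋂ u ∈ T, ({ω | G.Au (e1 u) ω = 1} ∩ {ω | G.Bu (Sym2.map π (e2 u)) ω = 1}))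
      = ENNReal.ofReal qu ^ (2 * T.card) := by
  classical
  have hind := (iIndepFun_iff_measure_inter_preimage_eq_mul).mp hmodel.2.2.2
  set Zfam := (Sum.elim
      (fun e : {e : Sym2 (Fin n) // ¬ e.IsDiag} =>
        fun ω => (G.Au e.1 ω, G.Bu (Sym2.map π e.1) ω))
      (fun p : Fin n × Fin m => fun ω => (G.Aa p ω, G.Ba (π p.1, p.2) ω))) with hZfam
  set g1 : {x // x ∈ T} → ({e : Sym2 (Fin n) // ¬ e.IsDiag} ⊕ (Fin n × Fin m)) :=
    (fun x => Sum.inl ⟨e1 x.1, hnd1 x.1 x.2⟩) with hg1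
  set g2 : {x // x ∈ T} → ({e : Sym2 (Fin n) // ¬ e.IsDiag} ⊕ (Fin n × Fin m)) :=
    (fun x => Sum.inl ⟨e2 x.1, hnd2 x.1 x.2⟩) with hg2
  set S1 := T.attach.image g1 with hS1
  set S2 := T.attach.image g2 with hS2
  have hg1inj : ∀ x ∈ T.attach, ∀ y ∈ T.attach, g1 x = g1 y → x = y := by
    intro x _ y _ hxy
    rw [hg1] at hxy
    simp only [Sum.inl.injEq, Subtype.mk.injEq] at hxy
    exact Subtype.ext (hinj1 x.2 y.2 hxy)
  have hg2inj : ∀ x ∈ T.attach, ∀ y ∈ T.attach, g2 x = g2 y → x = y := by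
    intro x _ y _ hxy
    rw [hg2] at hxy
    simp only [Sum.inl.injEq, Subtype.mk.injEq] at hxy
    exact Subtype.ext (hinj2 x.2 y.2 hxy)
  have hS12 : Disjoint S1 S2 := by
    rw [Finset.disjoint_left]
    rintro i hi1 hi2
    rw [hS1, Finset.mem_image] at hi1
    rw [hS2, Finset.mem_image] at hi2
    obtain ⟨x, _, hx⟩ := hi1
    obtain ⟨y, _, hy⟩ := hi2
    rw [← hy, hg1, hg2] at hx
    simp only [Sum.inl.injEq, Subtype.mk.injEq] at hx
    exact hdisj x.1 x.2 y.1 y.2 hx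
  set sets : ({e : Sym2 (Fin n) // ¬ e.IsDiag} ⊕ (Fin n × Fin m)) → Set (ℝ × ℝ) :=
    fun i => if i ∈ S1 then {p : ℝ × ℝ | p.1 = 1} else {p : ℝ × ℝ | p.2 = 1} with hsets
  have hMset : ∀ i, MeasurableSet (sets i) := by
    intro i
    rw [hsets]
    by_cases h : i ∈ S1 <;> simp only [h, if_true, if_false]
    · exact measurable_fst (measurableSet_singleton 1)
    · exact measurable_snd (measurableSet_singleton 1)
  have hform := hind (S1 ∪ S2) (sets := sets) (fun i _ => hMset i)
  have hsetEq : (⋂ i ∈ S1 ∪ S2, Zfam i ⁻¹' sets i)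
      = ⋂ u ∈ T, ({ω | G.Au (e1 u) ω = 1} ∩ {ω | G.Bu (Sym2.map π (e2 u)) ω = 1}) := by
    have hl : ∀ x : {x // x ∈ T}, Zfam (g1 x) ⁻¹' sets (g1 x) = {ω | G.Au (e1 x.1) ω = 1} := by
      intro x
      have hmem : g1 x ∈ S1 := Finset.mem_image_of_mem g1 (Finset.mem_attach T x)
      rw [hsets]
      simp only [hmem, if_true]
      rw [hZfam, hg1]; rfl
    have hr : ∀ x : {x // x ∈ T},
        Zfam (g2 x) ⁻¹' sets (g2 x) = {ω | G.Bu (Sym2.map π (e2 x.1)) ω = 1} := by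
      intro x
      have hmem : g2 x ∈ S2 := Finset.mem_image_of_mem g2 (Finset.mem_attach T x)
      have hnmem : g2 x ∉ S1 := Finset.disjoint_right.mp hS12 hmem
      rw [hsets]
      simp only [hnmem, if_false]
      rw [hZfam, hg2]; rfl
    ext ω
    simp only [Set.mem_iInter, Finset.mem_union, Set.mem_inter_iff, Set.mem_setOf_eq]
    constructor
    · intro h u hu
      have h1 := h (g1 ⟨u, hu⟩) (Or.inl (Finset.mem_image_of_mem g1 (Finset.mem_attach T _)))
      have h2 := h (g2 ⟨u, hu⟩) (Or.inr (Finset.mem_image_of_mem g2 (Finset.mem_attach T _)))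
      rw [hl ⟨u, hu⟩] at h1
      rw [hr ⟨u, hu⟩] at h2
      exact ⟨h1, h2⟩
    · intro h i hi
      rcases hi with hi | hi
      · rw [hS1, Finset.mem_image] at hi
        obtain ⟨x, _, rfl⟩ := hi
        rw [hl x]
        exact (h x.1 x.2).1
      · rw [hS2, Finset.mem_image] at hi
        obtain ⟨x, _, rfl⟩ := hi
        rw [hr x]
        exact (h x.1 x.2).2
  have hprodEq : ∏ i ∈ S1 ∪ S2, P (Zfam i ⁻¹' sets i)
      = ENNReal.ofReal qu ^ (2 * T.card) := by
    rw [Finset.prod_union hS12]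
    have hp1 : ∏ i ∈ S1, P (Zfam i ⁻¹' sets i) = ENNReal.ofReal qu ^ T.card := by
      rw [hS1, Finset.prod_image hg1inj]
      have hfac : ∀ x : {x // x ∈ T},
          P (Zfam (g1 x) ⁻¹' sets (g1 x)) = ENNReal.ofReal qu := by
        intro x
        have hmem : g1 x ∈ S1 := Finset.mem_image_of_mem g1 (Finset.mem_attach T x)
        have hcb := hmodel.2.1 (e1 x.1) (hnd1 x.1 x.2)
        have hpre : Zfam (g1 x) ⁻¹' sets (g1 x) = {ω | G.Au (e1 x.1) ω = 1} := by
          rw [hsets]; simp only [hmem, if_true]; rw [hZfam, hg1]; rfl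
        rw [hpre]
        exact corrBern_margX hcb hq0 hq1 hρ0 hρ1
      rw [Finset.prod_congr rfl (fun x _ => hfac x), Finset.prod_const, Finset.card_attach]
    have hp2 : ∏ i ∈ S2, P (Zfam i ⁻¹' sets i) = ENNReal.ofReal qu ^ T.card := by
      rw [hS2, Finset.prod_image hg2inj]
      have hfac : ∀ x : {x // x ∈ T},
          P (Zfam (g2 x) ⁻¹' sets (g2 x)) = ENNReal.ofReal qu := by
        intro x
        have hmem : g2 x ∈ S2 := Finset.mem_image_of_mem g2 (Finset.mem_attach T x)
        have hnmem : g2 x ∉ S1 := Finset.disjoint_right.mp hS12 hmem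
        have hcb := hmodel.2.1 (e2 x.1) (hnd2 x.1 x.2)
        have hpre : Zfam (g2 x) ⁻¹' sets (g2 x)
            = {ω | G.Bu (Sym2.map π (e2 x.1)) ω = 1} := by
          rw [hsets]; simp only [hnmem, if_false]; rw [hZfam, hg2]; rfl
        rw [hpre]
        exact corrBern_margY hcb hq0 hq1 hρ0 hρ1
      rw [Finset.prod_congr rfl (fun x _ => hfac x), Finset.prod_const, Finset.card_attach]
    rw [hp1, hp2, ← pow_add, two_mul]
  rw [← hsetEq, hform, hprodEq]

end Model

section Bounds
variable {Ω : Type*} [MeasurableSpace Ω] {n m : ℕ} {G : GraphPair Ω n m}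
  {P : Measure Ω} {π : Equiv.Perm (Fin n)} {qu ρu qa ρa : ℝ}

lemma prod01_eq_inter (hmodel : G.IsAttrER P π qu ρu qa ρa) {κ : Type*} (T : Finset κ)
    (e1 e2 : κ → Sym2 (Fin n))
    (hnd1 : ∀ u ∈ T, ¬ (e1 u).IsDiag) (hnd2 : ∀ u ∈ T, ¬ (e2 u).IsDiag) :
    (⋂ u ∈ T, {ω | G.Au (e1 u) ω * G.Bu (Sym2.map π (e2 u)) ω = 1})
      = ⋂ u ∈ T, ({ω | G.Au (e1 u) ω = 1} ∩ {ω | G.Bu (Sym2.map π (e2 u)) ω = 1}) := by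
  refine Set.iInter₂_congr fun u hu => ?_
  ext ω
  simp only [Set.mem_setOf_eq, Set.mem_inter_iff]
  constructor
  · intro h
    rcases (hmodel.2.1 (e1 u) (hnd1 u hu)).2.2.1 ω with hA | hA <;>
      rcases (hmodel.2.1 (e2 u) (hnd2 u hu)).2.2.2.1 ω with hB | hB <;>
        rw [hA, hB] at h <;> norm_num at h <;> exact ⟨hA, hB⟩
  · rintro ⟨h1, h2⟩
    rw [h1, h2, mul_one]

lemma lemWRONG [IsProbabilityMeasure P] (hmodel : G.IsAttrER P π qu ρu qa ρa)
    (hq0 : 0 < qu) (hq1 : qu < 1) (hρ0 : 0 < ρu) (hρ1 : ρu ≤ 1)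
    (hn : 4 ≤ n) (γ1 L : ℝ) (hγ1 : 1 < γ1)
    (hfb : (γ1 * Real.log γ1 - γ1 + 1) * (((n:ℝ)-2) * qu^2) = 3*L)
    (i j : Fin n) (hne : j ≠ π i) :
    P {ω | γ1 * ((n:ℝ)-2) * qu^2 ≤ ∑ u ∈ (univ.erase i).erase (π.symm j),
        G.Au s(i,u) ω * G.Bu (Sym2.map π s(π.symm j, u)) ω}
      ≤ ENNReal.ofReal (Real.exp (-(3*L))) := by
  classical
  have hsymm_ne : π.symm j ≠ i := fun h => hne (by rw [← h, Equiv.apply_symm_apply])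
  set U := (univ.erase i).erase (π.symm j) with hU
  have hmemU : ∀ u ∈ U, u ≠ π.symm j ∧ u ≠ i := by
    intro u hu
    rw [hU, Finset.mem_erase, Finset.mem_erase] at hu
    exact ⟨hu.1, hu.2.1⟩
  have hndA : ∀ u ∈ U, ¬ (s(i,u) : Sym2 (Fin n)).IsDiag := by
    intro u hu h
    exact (hmemU u hu).2 (Sym2.mk_isDiag_iff.mp h).symm
  have hndB : ∀ u ∈ U, ¬ (s(π.symm j, u) : Sym2 (Fin n)).IsDiag := by
    intro u hu h
    exact (hmemU u hu).1 (Sym2.mk_isDiag_iff.mp h).symm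
  have hcardU : U.card = n - 2 := by
    rw [hU, Finset.card_erase_of_mem (Finset.mem_erase.mpr ⟨hsymm_ne, Finset.mem_univ _⟩),
      Finset.card_erase_of_mem (Finset.mem_univ _), Finset.card_univ, Fintype.card_fin]
    omega
  have hmeas : ∀ u ∈ U, Measurable (fun ω => G.Au s(i,u) ω * G.Bu (Sym2.map π s(π.symm j, u)) ω) := by
    intro u hu
    exact ((hmodel.2.1 _ (hndA u hu)).1).mul ((hmodel.2.1 _ (hndB u hu)).2.1)
  have h01 : ∀ u ∈ U, ∀ ω, (G.Au s(i,u) ω * G.Bu (Sym2.map π s(π.symm j, u)) ω = 0)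
      ∨ (G.Au s(i,u) ω * G.Bu (Sym2.map π s(π.symm j, u)) ω = 1) := by
    intro u hu ω
    rcases (hmodel.2.1 _ (hndA u hu)).2.2.1 ω with hA | hA <;>
      rcases (hmodel.2.1 _ (hndB u hu)).2.2.2.1 ω with hB | hB <;>
        rw [hA, hB] <;> norm_num
  have hprod : ∀ T ∈ U.powerset, ∫ ω, (∏ u ∈ T,
      G.Au s(i,u) ω * G.Bu (Sym2.map π s(π.symm j, u)) ω) ∂P = (qu^2) ^ T.card := by
    intro T hT
    rw [Finset.mem_powerset] at hT
    rw [integral_prod01 T _ (fun u hu => hmeas u (hT hu)) (fun u hu => h01 u (hT hu))]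
    rw [prod01_eq_inter hmodel T _ _ (fun u hu => hndA u (hT hu)) (fun u hu => hndB u (hT hu))]
    rw [cross_prob hmodel T _ _ (fun u hu => hndA u (hT hu)) (fun u hu => hndB u (hT hu))
      ?_ ?_ ?_ hq0.le hq1.le hρ0.le hρ1]
    · rw [← ENNReal.ofReal_pow hq0.le, ENNReal.toReal_ofReal (by positivity), pow_mul]
    · intro x hx y hy hxy
      rcases Sym2.eq_iff.mp hxy with ⟨_, h2⟩ | ⟨h1, h2⟩
      · exact h2
      · exact absurd h2 (hmemU x (hT hx)).2
    · intro x hx y hy hxy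
      rcases Sym2.eq_iff.mp hxy with ⟨_, h2⟩ | ⟨h1, h2⟩
      · exact h2
      · exact absurd h2 (hmemU x (hT hx)).1
    · intro x hx y hy hxy
      rcases Sym2.eq_iff.mp hxy with ⟨h1, h2⟩ | ⟨h1, h2⟩
      · exact hsymm_ne h1.symm
      · exact (hmemU y (hT hy)).2 h1.symm
  have hbound := (chernoff_core U _ (qu^2) (Real.log γ1) (γ1 * ((n:ℝ)-2) * qu^2)
    hmeas h01 (by positivity) (by nlinarith) hprod).1 (Real.log_nonneg hγ1.le)
  refine le_trans hbound (ENNReal.ofReal_le_ofReal (Real.exp_le_exp.mpr (le_of_eq ?_)))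
  have hcast : ((U.card : ℕ) : ℝ) = (n:ℝ) - 2 := by
    rw [hcardU, Nat.cast_sub (by omega)]
    norm_num
  rw [hcast, Real.exp_log (by linarith : (0:ℝ) < γ1)]
  linear_combination -hfb

lemma lemSTUCK [IsProbabilityMeasure P] (hmodel : G.IsAttrER P π qu ρu qa ρa)
    (hq0 : 0 < qu) (hq1 : qu < 1) (hρ0 : 0 < ρu) (hρ1 : ρu ≤ 1)
    (ε γ1 L δ : ℝ) (hδ0 : 0 < δ) (hδ1 : δ ≤ 1)
    (ha0 : 0 ≤ qu^2 + ρu*qu*(1-qu)) (ha1 : qu^2 + ρu*qu*(1-qu) ≤ 1)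
    (S : Finset (Fin n)) (hcond : (1-ε/16)*(n:ℝ) ≤ (n:ℝ) - (S.card:ℝ))
    (hδE : (1+ε/4)*L ≤ γ1*((n:ℝ)-2)*qu^2 * Real.log δ
      + (1-ε/16)*((n:ℝ)*(qu^2+ρu*qu*(1-qu)))*(1-δ)) :
    P {ω | (∑ x ∈ S ×ˢ (univ \ S), G.Au s(x.1,x.2) ω * G.Bu (Sym2.map π s(x.1,x.2)) ω)
        ≤ (S.card:ℝ) * (γ1*((n:ℝ)-2)*qu^2)}
      ≤ ENNReal.ofReal (Real.exp (-((S.card:ℝ)*((1+ε/4)*L)))) := by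
  classical
  have hmemK : ∀ x : Fin n × Fin n, x ∈ S ×ˢ (univ \ S) → x.1 ∈ S ∧ x.2 ∉ S := by
    intro x hx
    rw [Finset.mem_product, Finset.mem_sdiff] at hx
    exact ⟨hx.1, hx.2.2⟩
  have hndK : ∀ x ∈ S ×ˢ (univ \ S), ¬ (s(x.1, x.2) : Sym2 (Fin n)).IsDiag := by
    intro x hx h
    obtain ⟨h1, h2⟩ := hmemK x hx
    exact h2 ((Sym2.mk_isDiag_iff.mp h) ▸ h1)
  have hmeas : ∀ x ∈ S ×ˢ (univ \ S),
      Measurable (fun ω => G.Au s(x.1,x.2) ω * G.Bu (Sym2.map π s(x.1,x.2)) ω) := by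
    intro x hx
    exact ((hmodel.2.1 _ (hndK x hx)).1).mul ((hmodel.2.1 _ (hndK x hx)).2.1)
  have h01 : ∀ x ∈ S ×ˢ (univ \ S), ∀ ω,
      (G.Au s(x.1,x.2) ω * G.Bu (Sym2.map π s(x.1,x.2)) ω = 0)
      ∨ (G.Au s(x.1,x.2) ω * G.Bu (Sym2.map π s(x.1,x.2)) ω = 1) := by
    intro x hx ω
    rcases (hmodel.2.1 _ (hndK x hx)).2.2.1 ω with hA | hA <;>
      rcases (hmodel.2.1 _ (hndK x hx)).2.2.2.1 ω with hB | hB <;>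
        rw [hA, hB] <;> norm_num
  have hprod : ∀ T ∈ (S ×ˢ (univ \ S)).powerset, ∫ ω, (∏ x ∈ T,
      G.Au s(x.1,x.2) ω * G.Bu (Sym2.map π s(x.1,x.2)) ω) ∂P
      = (qu^2 + ρu*qu*(1-qu)) ^ T.card := by
    intro T hT
    rw [Finset.mem_powerset] at hT
    rw [integral_prod01 T _ (fun x hx => hmeas x (hT hx)) (fun x hx => h01 x (hT hx))]
    rw [prod01_eq_inter hmodel T _ _ (fun x hx => hndK x (hT hx)) (fun x hx => hndK x (hT hx))]
    rw [joint_prob hmodel T _ (fun x hx => hndK x (hT hx)) ?_]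
    · rw [ENNReal.toReal_pow, ENNReal.toReal_ofReal ha0]
    · intro x hx y hy hxy
      rcases Sym2.eq_iff.mp hxy with ⟨h1, h2⟩ | ⟨h1, h2⟩
      · exact Prod.ext h1 h2
      · exact absurd (h1 ▸ (hmemK x (hT hx)).1) ((hmemK y (hT hy)).2)
  have hbound := (chernoff_core (S ×ˢ (univ \ S)) _ (qu^2 + ρu*qu*(1-qu)) (Real.log δ)
    ((S.card:ℝ) * (γ1*((n:ℝ)-2)*qu^2)) hmeas h01 ha0 ha1 hprod).2
    (Real.log_nonpos hδ0.le hδ1)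
  refine le_trans hbound (ENNReal.ofReal_le_ofReal (Real.exp_le_exp.mpr ?_))
  have hcardK : (((S ×ˢ (univ \ S)).card : ℕ) : ℝ) = (S.card:ℝ) * ((n:ℝ) - (S.card:ℝ)) := by
    rw [Finset.card_product, Finset.card_sdiff_of_subset (Finset.subset_univ _), Finset.card_univ,
      Fintype.card_fin, Nat.cast_mul,
      Nat.cast_sub (by simpa using Finset.card_le_card (Finset.subset_univ S))]
  rw [hcardK, Real.exp_log hδ0]
  set a := qu^2 + ρu*qu*(1-qu) with hadef
  set t := γ1*((n:ℝ)-2)*qu^2 with htdef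
  set s' := (S.card:ℝ) with hs'def
  have hs'0 : 0 ≤ s' := Nat.cast_nonneg _
  have hM : (1-ε/16)*(n:ℝ)*(a*(1-δ)) ≤ ((n:ℝ) - s')*(a*(1-δ)) := by
    exact mul_le_mul_of_nonneg_right hcond (mul_nonneg ha0 (by linarith))
  have hkey : (1+ε/4)*L ≤ t * Real.log δ + ((n:ℝ) - s')*(a*(1-δ)) := by
    calc (1+ε/4)*L ≤ t * Real.log δ + (1-ε/16)*((n:ℝ)*a)*(1-δ) := hδE
      _ ≤ t * Real.log δ + ((n:ℝ) - s')*(a*(1-δ)) := by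
          have : (1-ε/16)*((n:ℝ)*a)*(1-δ) = (1-ε/16)*(n:ℝ)*(a*(1-δ)) := by ring
          rw [this]
          linarith
  have := mul_le_mul_of_nonneg_left hkey hs'0
  nlinarith [this]

end Bounds

section Det
variable {Ω : Type*} {n m : ℕ} (G : GraphPair Ω n m) (ω : Ω) (π : Equiv.Perm (Fin n))

lemma lemDET (ε : ℝ) (thr : ℝ) (hthr : 0 < thr) (I0 : Finset (Fin n)) (ph : Fin n → Fin n)
    (hIcorr : ∀ u ∈ I0, ph u = π u) (hIcard : (1 - ε/16) * (n:ℝ) ≤ (I0.card : ℝ))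
    (h01A : ∀ i u : Fin n, i ≠ u → G.Au s(i,u) ω = 0 ∨ G.Au s(i,u) ω = 1)
    (h01B : ∀ j v : Fin n, j ≠ v → G.Bu s(j,v) ω = 0 ∨ G.Bu s(j,v) ω = 1)
    (hW : ∀ i j : Fin n, j ≠ π i →
      (∑ u ∈ (univ.erase i).erase (π.symm j),
        G.Au s(i,u) ω * G.Bu (Sym2.map π s(π.symm j, u)) ω) < thr)
    (hS : ∀ S : Finset (Fin n), S.Nonempty → (1 - ε/16) * (n:ℝ) ≤ (n:ℝ) - (S.card:ℝ) →
      (S.card:ℝ) * thr < ∑ x ∈ S ×ˢ (univ \ S),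
        G.Au s(x.1,x.2) ω * G.Bu (Sym2.map π s(x.1,x.2)) ω) :
    ∀ st : Finset (Fin n) × (Fin n → Fin n),
      Relation.ReflTransGen (StepSparse G ω thr) (I0, ph) st →
      (∀ st', ¬ StepSparse G ω thr st st') →
      st.1 = Finset.univ ∧ st.2 = ⇑π := by
  classical
  -- the invariant
  set Inv : Finset (Fin n) × (Fin n → Fin n) → Prop :=
    fun st => I0 ⊆ st.1 ∧ ∀ u ∈ st.1, st.2 u = π u with hInv
  -- Step preserves the invariant
  have hpres : ∀ st st', Inv st → StepSparse G ω thr st st' → Inv st' := by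
    rintro st st' ⟨hI, hcorr⟩ ⟨i, j, hiJ, hjim, hcnt, hst1, hst2⟩
    have hjπ : j = π i := by
      by_contra hne
      -- the NuJ count is bounded by the wrong-pair sum
      have hsub : (st.1.filter (fun u => u ≠ i ∧ G.Au s(i, u) ω = 1 ∧ st.2 u ≠ j ∧
          G.Bu s(j, st.2 u) ω = 1)) ⊆ (univ.erase i).erase (π.symm j) := by
        intro u hu
        rw [Finset.mem_filter] at hu
        obtain ⟨huJ, hune, _, hgne, _⟩ := hu
        rw [Finset.mem_erase, Finset.mem_erase]
        refine ⟨?_, hune, Finset.mem_univ u⟩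
        intro hsymm
        apply hgne
        rw [hcorr u huJ, hsymm, Equiv.apply_symm_apply]
      have hone : ∀ u ∈ (st.1.filter (fun u => u ≠ i ∧ G.Au s(i, u) ω = 1 ∧ st.2 u ≠ j ∧
          G.Bu s(j, st.2 u) ω = 1)),
          G.Au s(i,u) ω * G.Bu (Sym2.map π s(π.symm j, u)) ω = 1 := by
        intro u hu
        rw [Finset.mem_filter] at hu
        obtain ⟨huJ, _, hA1, _, hB1⟩ := hu
        rw [Sym2.map_pair_eq, Equiv.apply_symm_apply, hA1, ← hcorr u huJ, hB1, mul_one]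
      have hnn : ∀ u ∈ (univ.erase i).erase (π.symm j),
          0 ≤ G.Au s(i,u) ω * G.Bu (Sym2.map π s(π.symm j, u)) ω := by
        intro u hu
        rw [Finset.mem_erase, Finset.mem_erase] at hu
        obtain ⟨hu1, hu2, _⟩ := hu
        refine mul_nonneg ?_ ?_
        · rcases h01A i u (fun h => hu2 h.symm) with h | h <;> rw [h] <;> norm_num
        · rw [Sym2.map_pair_eq, Equiv.apply_symm_apply]
          rcases h01B j (π u) (fun h => hu1 (by rw [← Equiv.symm_apply_apply π u, ← h])) with
            h | h <;> rw [h] <;> norm_num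
      have hchain : (NuJ G ω st.1 st.2 i j : ℝ) ≤
          ∑ u ∈ (univ.erase i).erase (π.symm j),
            G.Au s(i,u) ω * G.Bu (Sym2.map π s(π.symm j, u)) ω := by
        unfold NuJ
        rw [show ((st.1.filter (fun u => u ≠ i ∧ G.Au s(i, u) ω = 1 ∧ st.2 u ≠ j ∧
            G.Bu s(j, st.2 u) ω = 1)).card : ℝ)
          = ∑ u ∈ (st.1.filter (fun u => u ≠ i ∧ G.Au s(i, u) ω = 1 ∧ st.2 u ≠ j ∧
            G.Bu s(j, st.2 u) ω = 1)),
            G.Au s(i,u) ω * G.Bu (Sym2.map π s(π.symm j, u)) ω from ?_]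
        · exact Finset.sum_le_sum_of_subset_of_nonneg hsub (fun u hu _ => hnn u hu)
        · rw [Finset.sum_congr rfl hone, Finset.sum_const, nsmul_eq_mul, mul_one]
      exact absurd hcnt (not_le.mpr (lt_of_le_of_lt hchain (hW i j hne)))
    constructor
    · rw [hst1]; exact hI.trans (Finset.subset_insert i st.1)
    · intro u hu
      rw [hst1, Finset.mem_insert] at hu
      rcases hu with rfl | hu
      · rw [hst2, Function.update_self, hjπ]
      · rw [hst2, Function.update_of_ne (fun h => hiJ (by rw [← h]; exact hu)), hcorr u hu]
  -- invariant holds along any run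
  have hInvRun : ∀ st, Relation.ReflTransGen (StepSparse G ω thr) (I0, ph) st → Inv st := by
    intro st hrun
    induction hrun with
    | refl => exact ⟨Finset.Subset.refl _, hIcorr⟩
    | tail hsteps hstep ih => exact hpres _ _ ih hstep
  -- a stuck state must be complete
  intro st hrun hstop
  obtain ⟨hI, hcorr⟩ := hInvRun st hrun
  have huniv : st.1 = Finset.univ := by
    by_contra hne
    set S := (univ : Finset (Fin n)) \ st.1 with hSdef
    have hSne : S.Nonempty := by
      rw [hSdef]
      rw [Finset.sdiff_nonempty]
      intro hsub
      exact hne (Finset.Subset.antisymm (Finset.subset_univ _) hsub)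
    have hcardst : (S.card : ℝ) = (n:ℝ) - (st.1.card : ℝ) := by
      rw [hSdef, Finset.card_sdiff_of_subset (Finset.subset_univ _)]
      rw [Nat.cast_sub (Finset.card_le_card (Finset.subset_univ _))]
      simp
    have hsize : (1 - ε/16) * (n:ℝ) ≤ (n:ℝ) - (S.card:ℝ) := by
      have h1 : (I0.card : ℝ) ≤ (st.1.card : ℝ) := by
        exact_mod_cast Finset.card_le_card hI
      rw [hcardst]
      linarith
    have hst1 : (univ : Finset (Fin n)) \ S = st.1 := by
      rw [hSdef, Finset.sdiff_sdiff_eq_self (Finset.subset_univ _)]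
    have htot := hS S hSne hsize
    rw [hst1] at htot
    -- extract a good row i
    have hex : ∃ i ∈ S, thr ≤ ∑ u ∈ st.1, G.Au s(i,u) ω * G.Bu (Sym2.map π s(i,u)) ω := by
      by_contra hall
      push_neg at hall
      have hlt := Finset.sum_lt_sum_of_nonempty hSne
        (f := fun i => ∑ u ∈ st.1, G.Au s(i,u) ω * G.Bu (Sym2.map π s(i,u)) ω)
        (g := fun _ => thr) (fun i hi => hall i hi)
      simp only [Finset.sum_const, nsmul_eq_mul] at hlt
      rw [Finset.sum_product] at htot
      linarith
    obtain ⟨i, hiS, hige⟩ := hex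
    have hiJ : i ∉ st.1 := by
      rw [hSdef, Finset.mem_sdiff] at hiS
      exact hiS.2
    -- build a step, contradicting stuckness
    apply hstop (insert i st.1, Function.update st.2 i (π i))
    refine ⟨i, π i, hiJ, ?_, ?_, rfl, rfl⟩
    · intro u hu h
      rw [hcorr u hu] at h
      exact hiJ ((π.injective h) ▸ hu)
    · -- count the sum in NuJ
      have hval : ∀ u ∈ st.1, G.Au s(i,u) ω * G.Bu (Sym2.map π s(i,u)) ω
          = if (u ≠ i ∧ G.Au s(i, u) ω = 1 ∧ st.2 u ≠ π i ∧ G.Bu s(π i, st.2 u) ω = 1)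
            then 1 else 0 := by
        intro u hu
        have hune : u ≠ i := fun h => hiJ (h ▸ hu)
        have hBrw : Sym2.map π s(i,u) = s(π i, st.2 u) := by
          rw [Sym2.map_pair_eq, hcorr u hu]
        have hπne : st.2 u ≠ π i := by
          rw [hcorr u hu]
          exact fun h => hune (π.injective h)
        rcases h01A i u (fun h => hune h.symm) with hA | hA <;>
          rcases h01B (π i) (st.2 u) (fun h => hπne h.symm) with hB | hB <;>
            rw [hBrw, hA, hB] <;> simp [hune, hπne]
      have hsum : ∑ u ∈ st.1, G.Au s(i,u) ω * G.Bu (Sym2.map π s(i,u)) ω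
          = ((st.1.filter (fun u => u ≠ i ∧ G.Au s(i, u) ω = 1 ∧ st.2 u ≠ π i ∧
              G.Bu s(π i, st.2 u) ω = 1)).card : ℝ) := by
        rw [Finset.sum_congr rfl hval, Finset.sum_ite, Finset.sum_const, Finset.sum_const]
        simp
      unfold NuJ
      rw [← hsum]
      exact hige
  refine ⟨huniv, funext fun u => ?_⟩
  exact hcorr u (huniv ▸ Finset.mem_univ u)
end Det

lemma geoaux (x:ℝ) (hx0 : 0 ≤ x) (hx : x ≤ 1/2) (N : ℕ) :
    ∑ j ∈ Finset.Icc 1 N, x^j ≤ 2*x := by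
  rcases eq_or_lt_of_le hx0 with h0 | h0
  · rw [Finset.sum_eq_zero]
    · linarith
    · intro j hj
      rw [← h0]
      exact zero_pow (by rw [Finset.mem_Icc] at hj; omega)
  · have hx1 : x ≠ 1 := by linarith
    rw [← Finset.Ico_add_one_right_eq_Icc, geom_sum_Ico hx1 (by omega)]
    rw [show x^(N+1) - x^1 = -(x - x^(N+1)) by ring, show x - 1 = -(1-x) by ring,
      neg_div_neg_eq]
    rw [div_le_iff₀ (by linarith)]
    nlinarith [pow_nonneg hx0 (N+1)]

lemma main_n {Ω : Type*} [MeasurableSpace Ω] {n m : ℕ}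
    (ε : ℝ) (hε : 0 < ε) (hε2 : ε ≤ 2)
    (G : GraphPair Ω n m) (P : Measure Ω) (π : Equiv.Perm (Fin n))
    (qu ρu qa ρa : ℝ) (hmodel : G.IsAttrER P π qu ρu qa ρa)
    (hn : 4 ≤ n)
    (hL1 : 1 ≤ Real.log n)
    (hhalf : Real.exp (-(ε/4) * Real.log n) ≤ 1/2)
    (hWn : max (16*Cc ε) (8*Cc ε*(Rs ε)^2) * Real.log n ≤ (n:ℝ) * ρu^2)
    (h2n : (1+ε) * Real.log n ≤ (n:ℝ) * qu * (qu + ρu*(1-qu)))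
    (h3n : ε ≤ ρu * (1-qu) / qu)
    (γ1 : ℝ) (hγ1 : 1 < γ1)
    (hγeq : γ1 * Real.log γ1 - γ1 + 1 = 3 * Real.log n / (((n:ℝ)-2) * qu^2))
    (I : Ω → Finset (Fin n)) (ph : Ω → Fin n → Fin n)
    (hI : ∀ ω, (∀ u ∈ I ω, ph ω u = π u) ∧ (1-ε/16) * (n:ℝ) ≤ ((I ω).card : ℝ)) :
    1 - (ENNReal.ofReal ((n:ℝ)⁻¹) + ENNReal.ofReal (2 * Real.exp (-(ε/4) * Real.log n)))
      ≤ P {ω | ∀ st : Finset (Fin n) × (Fin n → Fin n),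
        Relation.ReflTransGen (StepSparse G ω (γ1 * ((n:ℝ) - 2) * qu ^ 2)) (I ω, ph ω) st →
        (∀ st', ¬ StepSparse G ω (γ1 * ((n:ℝ) - 2) * qu ^ 2) st st') →
        st.1 = Finset.univ ∧ st.2 = ⇑π} := by
  classical
  haveI : IsProbabilityMeasure P := hmodel.1
  have hn0 : (0:ℝ) < n := by exact_mod_cast (show 0 < n by omega)
  have hn4 : (4:ℝ) ≤ n := by exact_mod_cast hn
  set L := Real.log n with hLdef
  have hLpos : (0:ℝ) < L := by linarith
  -- qu ≠ 0
  have hq2pos : 0 < qu^2 := by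
    rcases lt_or_eq_of_le (sq_nonneg qu) with h | h
    · exact h
    · exfalso
      rw [← h] at hγeq
      have : (0:ℝ) < γ1 * Real.log γ1 - γ1 + 1 := fln_pos hγ1
      rw [hγeq] at this
      simp at this
  have hqne : qu ≠ 0 := by
    intro h; rw [h] at hq2pos; simp at hq2pos
  have hρq : 0 < ρu*(1-qu)/qu := lt_of_lt_of_le hε h3n
  have hndiag0 : ¬ (s((⟨0, by omega⟩ : Fin n), (⟨1, by omega⟩ : Fin n)) : Sym2 (Fin n)).IsDiag := by
    rw [Sym2.mk_isDiag_iff]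
    intro h
    simp [Fin.ext_iff] at h
  obtain ⟨hq0, hq1, hρ0, hρ1⟩ := corrBern_range (hmodel.2.1 _ hndiag0) hqne hρq
  set a := qu^2 + ρu*qu*(1-qu) with hadef
  have ha0 : 0 ≤ a := by
    rw [hadef]
    nlinarith [mul_nonneg (mul_nonneg hρ0.le hq0.le) (show (0:ℝ) ≤ 1-qu by linarith)]
  have ha1 : a ≤ 1 := by
    rw [← ENNReal.ofReal_le_one, ← (hmodel.2.1 _ hndiag0).2.2.2.2.1]
    exact prob_le_one
  set b := ((n:ℝ)-2)*qu^2 with hbdef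
  have hb : 0 < b := by
    rw [hbdef]
    exact mul_pos (by linarith) hq2pos
  have hfb : (γ1*Real.log γ1 - γ1 + 1) * b = 3*L := by
    rw [hγeq, hbdef]
    field_simp
    exact div_self (ne_of_gt (by linarith))
  set R := a / qu^2 with hRdef
  have hRb : R * b = ((n:ℝ)-2)*a := by
    rw [hRdef, hbdef]
    field_simp
  have h3n' : ε*qu ≤ ρu*(1-qu) := by
    rw [le_div_iff₀ hq0] at h3n
    linarith
  have hR : 1+ε ≤ R := by
    rw [hRdef, le_div_iff₀ hq2pos, hadef]
    nlinarith [mul_le_mul_of_nonneg_right h3n' hq0.le]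
  set m0 := (1-ε/16)*((n:ℝ)*a) with hm0def
  have hna : (n:ℝ)*qu*(qu+ρu*(1-qu)) = (n:ℝ)*a := by rw [hadef]; ring
  have hm1 : (1+13*ε/16)*L ≤ m0 := by
    rw [hm0def]
    have h1 : (1+ε)*L ≤ (n:ℝ)*a := by rw [← hna]; exact h2n
    have h2 := mul_le_mul_of_nonneg_left h1 (show (0:ℝ) ≤ 1-ε/16 by linarith)
    nlinarith [h2, mul_nonneg (mul_nonneg hε.le (sub_nonneg.mpr hε2)) hLpos.le]
  have hm2 : (1-ε/16)*(R*b) ≤ m0 := by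
    rw [hRb, hm0def]
    have : ((n:ℝ)-2)*a ≤ (n:ℝ)*a := by nlinarith
    nlinarith
  have hCc1 : (1:ℝ) ≤ Cc ε := le_trans (le_max_right _ _) (le_max_right _ _)
  have hRs0 : 0 < Rs ε := Real.exp_pos _
  have hcase : Cc ε * L ≤ b ∨ Rs ε ≤ R := by
    by_cases hbC : Cc ε * L ≤ b
    · exact Or.inl hbC
    · right
      push_neg at hbC
      have hKn : (16*Cc ε) * L ≤ (n:ℝ)*ρu^2 := le_trans
        (mul_le_mul_of_nonneg_right (le_max_left _ _) hLpos.le) hWn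
      have hKn2 : (8*Cc ε*(Rs ε)^2) * L ≤ (n:ℝ)*ρu^2 := le_trans
        (mul_le_mul_of_nonneg_right (le_max_right _ _) hLpos.le) hWn
      have hnρ : (n:ℝ)*ρu^2 ≤ n := by
        nlinarith [mul_nonneg hn0.le (mul_nonneg (sub_nonneg.mpr hρ1)
          (show (0:ℝ) ≤ 1+ρu by linarith))]
      have hn2 : (n:ℝ)/2 ≤ (n:ℝ)-2 := by linarith
      -- q ≤ 1/2
      have hq2small : qu^2 < Cc ε * L / ((n:ℝ)-2) := by
        rw [lt_div_iff₀ (by linarith)]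
        nlinarith
      have hCLn : Cc ε * L ≤ ((n:ℝ)-2)/8 := by
        have : 16 * Cc ε * L ≤ (n:ℝ) := by nlinarith
        linarith
      have hqhalf : qu ≤ 1/2 := by
        have hq2q : qu^2 ≤ 1/8 := by
          have := lt_of_lt_of_le hq2small (by
            rw [div_le_iff₀ (show (0:ℝ) < (n:ℝ)-2 by linarith)]
            nlinarith : Cc ε * L / ((n:ℝ)-2) ≤ 1/8)
          linarith
        nlinarith
      -- ρ/q > 2 Rs
      have hρ2q : ρu > 2 * Rs ε * qu := by
        have h1 : ρu^2 > 4*(Rs ε)^2*qu^2 := by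
          have hcc : 0 < Cc ε := by linarith
          have h2 : ((n:ℝ)-2)*qu^2 < Cc ε * L := hbC
          -- n ρ² ≥ 8 C Rs² L  and (n-2) q² < C L with n-2 ≥ n/2
          have h3 : (n:ℝ)/2 * qu^2 < Cc ε * L := by nlinarith
          nlinarith [sq_nonneg (Rs ε), hq2pos]
        nlinarith [sq_nonneg (ρu - 2*Rs ε*qu), mul_pos (mul_pos (show (0:ℝ) < 2 by norm_num) hRs0) hq0]
      have : Rs ε ≤ ρu*(1-qu)/qu := by
        rw [le_div_iff₀ hq0]
        nlinarith
      rw [hRdef]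
      calc Rs ε ≤ ρu*(1-qu)/qu := this
        _ ≤ 1 + ρu*(1-qu)/qu := by linarith
        _ = a/qu^2 := by rw [hadef]; field_simp
  obtain ⟨δ, hδ0, hδ1, hδE⟩ := lemA (t := γ1 * ((n:ℝ) - 2) * qu ^ 2) hε hε2 hL1 hb hγ1
    (show fln γ1 * b = 3*L from hfb) (by rw [hbdef]; ring) hm1 hm2 hR hcase
  set thr := γ1 * ((n:ℝ) - 2) * qu ^ 2 with hthrdef
  have hthr : 0 < thr := by
    rw [hthrdef]
    exact mul_pos (mul_pos (by linarith) (by linarith)) hq2pos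
  have hndAu : ∀ i u : Fin n, i ≠ u → ¬ (s(i,u) : Sym2 (Fin n)).IsDiag := by
    intro i u h hd; exact h (Sym2.mk_isDiag_iff.mp hd)
  have h01A : ∀ ω, ∀ i u : Fin n, i ≠ u → G.Au s(i,u) ω = 0 ∨ G.Au s(i,u) ω = 1 :=
    fun ω i u h => (hmodel.2.1 _ (hndAu i u h)).2.2.1 ω
  have h01B : ∀ ω, ∀ j v : Fin n, j ≠ v → G.Bu s(j,v) ω = 0 ∨ G.Bu s(j,v) ω = 1 := by
    intro ω j v h
    have hnd : ¬ (s(π.symm j, π.symm v) : Sym2 (Fin n)).IsDiag :=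
      hndAu _ _ (fun hh => h (by
        rw [← Equiv.apply_symm_apply π j, hh, Equiv.apply_symm_apply]))
    have h2 := (hmodel.2.1 _ hnd).2.2.2.1 ω
    rwa [Sym2.map_pair_eq, Equiv.apply_symm_apply, Equiv.apply_symm_apply] at h2
  set WrongEv : Fin n × Fin n → Set Ω := fun p =>
    {ω | thr ≤ ∑ u ∈ (univ.erase p.1).erase (π.symm p.2),
      G.Au s(p.1,u) ω * G.Bu (Sym2.map π s(π.symm p.2, u)) ω} with hWE
  set StuckEv : Finset (Fin n) → Set Ω := fun S =>
    {ω | (∑ x ∈ S ×ˢ (univ \ S), G.Au s(x.1,x.2) ω * G.Bu (Sym2.map π s(x.1,x.2)) ω)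
      ≤ (S.card:ℝ) * thr} with hSE
  set filterW : Finset (Fin n × Fin n) :=
    Finset.filter (fun p : Fin n × Fin n => p.2 ≠ π p.1) Finset.univ with hfW
  set filterS : ℕ → Finset (Finset (Fin n)) := fun k => Finset.filter
    (fun S : Finset (Fin n) => (1-ε/16)*(n:ℝ) ≤ (n:ℝ) - (S.card:ℝ))
    (Finset.powersetCard k Finset.univ) with hfS
  set Bad : Set Ω := (⋃ p ∈ filterW, WrongEv p)
    ∪ ⋃ k ∈ Finset.Icc 1 n, ⋃ S ∈ filterS k, StuckEv S with hBad
  have hWmeasset : ∀ p : Fin n × Fin n, MeasurableSet (WrongEv p) := by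
    intro p
    rw [hWE]
    apply measurableSet_le measurable_const
    apply Finset.measurable_sum
    intro u hu
    rw [Finset.mem_erase, Finset.mem_erase] at hu
    have h1 : p.1 ≠ u := fun h => hu.2.1 h.symm
    have h2 : π.symm p.2 ≠ u := fun h => hu.1 h.symm
    exact ((hmodel.2.1 _ (hndAu _ _ h1)).1).mul ((hmodel.2.1 _ (hndAu _ _ h2)).2.1)
  have hSmeasset : ∀ S : Finset (Fin n), MeasurableSet (StuckEv S) := by
    intro S
    rw [hSE]
    apply measurableSet_le _ measurable_const
    apply Finset.measurable_sum
    intro x hx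
    rw [Finset.mem_product, Finset.mem_sdiff] at hx
    have h1 : x.1 ≠ x.2 := fun h => hx.2.2 (h ▸ hx.1)
    exact ((hmodel.2.1 _ (hndAu _ _ h1)).1).mul ((hmodel.2.1 _ (hndAu _ _ h1)).2.1)
  have hBadMeas : MeasurableSet Bad := by
    rw [hBad]
    apply MeasurableSet.union
    · exact Finset.measurableSet_biUnion _ (fun p _ => hWmeasset p)
    · exact Finset.measurableSet_biUnion _ (fun k _ =>
        Finset.measurableSet_biUnion _ (fun S _ => hSmeasset S))
  -- deterministic inclusion
  have hincl : Badᶜ ⊆ {ω | ∀ st : Finset (Fin n) × (Fin n → Fin n),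
      Relation.ReflTransGen (StepSparse G ω thr) (I ω, ph ω) st →
      (∀ st', ¬ StepSparse G ω thr st st') →
      st.1 = Finset.univ ∧ st.2 = ⇑π} := by
    intro ω hω
    rw [Set.mem_compl_iff, hBad, Set.mem_union, not_or] at hω
    obtain ⟨hωW, hωS⟩ := hω
    intro st hrun hstop
    refine lemDET G ω π ε thr hthr (I ω) (ph ω) (hI ω).1 (hI ω).2 (h01A ω) (h01B ω)
      ?_ ?_ st hrun hstop
    · intro i j hne
      by_contra hge
      push_neg at hge
      exact hωW (Set.mem_biUnion (Finset.mem_filter.mpr ⟨Finset.mem_univ (i,j), hne⟩)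
        (by exact hge))
    · intro S hSne hcond
      by_contra hle
      push_neg at hle
      have hk1 : 1 ≤ S.card := Finset.card_pos.mpr hSne
      have hkn : S.card ≤ n := by
        have := Finset.card_le_card (Finset.subset_univ S)
        simpa using this
      refine hωS (Set.mem_biUnion (Finset.mem_Icc.mpr ⟨hk1, hkn⟩) ?_)
      exact Set.mem_biUnion (Finset.mem_filter.mpr
        ⟨Finset.mem_powersetCard.mpr ⟨Finset.subset_univ _, rfl⟩, hcond⟩) (by exact hle)
  -- probability bounds
  have hPW : P (⋃ p ∈ filterW, WrongEv p) ≤ ENNReal.ofReal ((n:ℝ)⁻¹) := by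
    have hexp3 : Real.exp (-(3*L)) = (((n:ℝ))^(3:ℕ))⁻¹ := by
      rw [hLdef, show (3:ℝ)*Real.log n = ((3:ℕ):ℝ)*Real.log n by norm_num, Real.exp_neg,
        Real.exp_nat_mul, Real.exp_log hn0]
    calc P (⋃ p ∈ filterW, WrongEv p) ≤ ∑ p ∈ filterW, P (WrongEv p) :=
          measure_biUnion_finset_le _ _
      _ ≤ ∑ _p ∈ filterW, ENNReal.ofReal (Real.exp (-(3*L))) := by
          refine Finset.sum_le_sum (fun p hp => ?_)
          rw [hfW, Finset.mem_filter] at hp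
          exact lemWRONG hmodel hq0 hq1 hρ0 hρ1 hn γ1 L hγ1 hfb p.1 p.2 hp.2
      _ = (filterW.card : ℝ≥0∞) * ENNReal.ofReal (Real.exp (-(3*L))) := by
          rw [Finset.sum_const, nsmul_eq_mul]
      _ ≤ ((n*n : ℕ) : ℝ≥0∞) * ENNReal.ofReal (Real.exp (-(3*L))) := by
          refine mul_le_mul_left (Nat.cast_le.mpr ?_) _
          calc filterW.card ≤ (Finset.univ : Finset (Fin n × Fin n)).card :=
                Finset.card_filter_le _ _
            _ = n * n := by simp [Finset.card_univ]
      _ = ENNReal.ofReal (((n*n : ℕ) : ℝ) * Real.exp (-(3*L))) := by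
          rw [← ENNReal.ofReal_natCast (n*n), ← ENNReal.ofReal_mul (Nat.cast_nonneg _)]
      _ ≤ ENNReal.ofReal ((n:ℝ)⁻¹) := by
          apply ENNReal.ofReal_le_ofReal
          apply le_of_eq
          rw [hexp3]
          push_cast
          field_simp
  have hPS : P (⋃ k ∈ Finset.Icc 1 n, ⋃ S ∈ filterS k, StuckEv S)
      ≤ ENNReal.ofReal (2 * Real.exp (-(ε/4) * L)) := by
    set x := Real.exp (-(ε/4)*L) with hxdef
    have hx0 : (0:ℝ) ≤ x := (Real.exp_pos _).le
    have hinner : ∀ k ∈ Finset.Icc 1 n,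
        P (⋃ S ∈ filterS k, StuckEv S) ≤ ENNReal.ofReal (x^k) := by
      intro k hk
      have hterm : ∀ S ∈ filterS k, P (StuckEv S)
          ≤ ENNReal.ofReal (Real.exp (-((k:ℝ)*((1+ε/4)*L)))) := by
        intro S hSf
        rw [hfS, Finset.mem_filter] at hSf
        have hSC : S.card = k := (Finset.mem_powersetCard.mp hSf.1).2
        have hb1 := lemSTUCK hmodel hq0 hq1 hρ0 hρ1 ε γ1 L δ hδ0 hδ1 ha0 ha1 S hSf.2 hδE
        calc P (StuckEv S) ≤ ENNReal.ofReal (Real.exp (-(((S.card:ℕ):ℝ)*((1+ε/4)*L)))) := hb1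
          _ = ENNReal.ofReal (Real.exp (-((k:ℝ)*((1+ε/4)*L)))) := by rw [hSC]
      have hcards : (filterS k).card ≤ n.choose k := by
        calc (filterS k).card ≤ (Finset.powersetCard k (Finset.univ : Finset (Fin n))).card :=
              Finset.card_filter_le _ _
          _ = n.choose k := by rw [Finset.card_powersetCard]; simp [Finset.card_univ]
      have hkey : ((n:ℝ))^k * Real.exp (-((k:ℝ)*((1+ε/4)*L))) = x^k := by
        have h1 : Real.exp (-((k:ℝ)*((1+ε/4)*L))) = (Real.exp (-L))^k * x^k := by
          rw [hxdef, ← Real.exp_nat_mul, ← Real.exp_nat_mul, ← Real.exp_add]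
          congr 1; ring
        rw [h1, ← mul_assoc, ← mul_pow, Real.exp_neg, Real.exp_log hn0,
          mul_inv_cancel₀ (ne_of_gt hn0), one_pow, one_mul]
      calc P (⋃ S ∈ filterS k, StuckEv S) ≤ ∑ S ∈ filterS k, P (StuckEv S) :=
            measure_biUnion_finset_le _ _
        _ ≤ ∑ _S ∈ filterS k, ENNReal.ofReal (Real.exp (-((k:ℝ)*((1+ε/4)*L)))) :=
            Finset.sum_le_sum hterm
        _ = ((filterS k).card : ℝ≥0∞) * ENNReal.ofReal (Real.exp (-((k:ℝ)*((1+ε/4)*L)))) := by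
            rw [Finset.sum_const, nsmul_eq_mul]
        _ ≤ ((n^k : ℕ) : ℝ≥0∞) * ENNReal.ofReal (Real.exp (-((k:ℝ)*((1+ε/4)*L)))) := by
            refine mul_le_mul_left (Nat.cast_le.mpr ?_) _
            exact le_trans hcards (Nat.choose_le_pow n k)
        _ = ENNReal.ofReal (((n^k : ℕ) : ℝ) * Real.exp (-((k:ℝ)*((1+ε/4)*L)))) := by
            rw [← ENNReal.ofReal_natCast (n^k), ← ENNReal.ofReal_mul (Nat.cast_nonneg _)]
        _ = ENNReal.ofReal (x^k) := by
            rw [← hkey]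
            push_cast
            ring_nf
    calc P (⋃ k ∈ Finset.Icc 1 n, ⋃ S ∈ filterS k, StuckEv S)
        ≤ ∑ k ∈ Finset.Icc 1 n, P (⋃ S ∈ filterS k, StuckEv S) :=
          measure_biUnion_finset_le _ _
      _ ≤ ∑ k ∈ Finset.Icc 1 n, ENNReal.ofReal (x^k) := Finset.sum_le_sum hinner
      _ = ENNReal.ofReal (∑ k ∈ Finset.Icc 1 n, x^k) :=
          (ENNReal.ofReal_sum_of_nonneg (fun k _ => pow_nonneg hx0 k)).symm
      _ ≤ ENNReal.ofReal (2*x) := ENNReal.ofReal_le_ofReal (geoaux x hx0 hhalf n)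
  have hPBad : P Bad ≤ ENNReal.ofReal ((n:ℝ)⁻¹) + ENNReal.ofReal (2 * Real.exp (-(ε/4)*L)) := by
    rw [hBad]
    exact le_trans (measure_union_le _ _) (add_le_add hPW hPS)
  calc 1 - (ENNReal.ofReal ((n:ℝ)⁻¹) + ENNReal.ofReal (2 * Real.exp (-(ε/4) * L)))
      ≤ 1 - P Bad := tsub_le_tsub_left hPBad 1
    _ = P Badᶜ := (prob_compl_eq_one_sub hBadMeas).symm
    _ ≤ P {ω | ∀ st : Finset (Fin n) × (Fin n → Fin n),
        Relation.ReflTransGen (StepSparse G ω thr) (I ω, ph ω) st →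
        (∀ st', ¬ StepSparse G ω thr st st') →
        st.1 = Finset.univ ∧ st.2 = ⇑π} := measure_mono hincl

/-- **Correctness of the greedy refinement in the attribute-sparse regime
(Proposition 4).** Under `n·ρ_u² = ω(log n)`, `n·q_u·(q_u+ρ_u(1-q_u)) ≥ (1+ε)·log n` and
`ρ_u(1-q_u)/q_u ≥ ε`, if `π̂ : I → [n]` agrees with `π*` on `I` and
`|I| ≥ (1-ε/16)·n`, then with high probability every run of the greedy refinement with
threshold `γ₁·(n-2)·q_u²` (where `γ₁ > 1` solves `f(γ₁) = 3 log n/((n-2)q_u²)`) ends in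
a terminal state with `J = [n]` and `π̃ = π*`. -/
theorem refinement_sparse_correct (ε : ℝ) (hε : 0 < ε)
    (Ω : ℕ → Type*) [∀ n, MeasurableSpace (Ω n)] (P : ∀ n, Measure (Ω n))
    (m : ℕ → ℕ) (qu ρu qa ρa : ℕ → ℝ)
    (G : ∀ n, GraphPair (Ω n) n (m n)) (πs : ∀ n, Equiv.Perm (Fin n))
    (hmodel : ∀ n, (G n).IsAttrER (P n) (πs n) (qu n) (ρu n) (qa n) (ρa n))
    (h1 : Tendsto (fun n : ℕ => (n : ℝ) * ρu n ^ 2 / Real.log n) atTop atTop)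
    (h2 : ∀ n : ℕ, (1 + ε) * Real.log n ≤ (n : ℝ) * qu n * (qu n + ρu n * (1 - qu n)))
    (h3 : ∀ n, ε ≤ ρu n * (1 - qu n) / qu n)
    (γ1 : ℕ → ℝ)
    (hγ : ∀ n : ℕ, 3 ≤ n → 1 < γ1 n ∧
      γ1 n * Real.log (γ1 n) - γ1 n + 1 = 3 * Real.log n / (((n : ℝ) - 2) * qu n ^ 2))
    (I : ∀ n, Ω n → Finset (Fin n)) (πhat : ∀ n, Ω n → Fin n → Fin n)
    (hI : ∀ n ω, (∀ u ∈ I n ω, πhat n ω u = πs n u) ∧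
      (1 - ε / 16) * (n : ℝ) ≤ ((I n ω).card : ℝ)) :
    Tendsto (fun n => P n {ω |
      ∀ st : Finset (Fin n) × (Fin n → Fin n),
        Relation.ReflTransGen (StepSparse (G n) ω (γ1 n * ((n : ℝ) - 2) * qu n ^ 2))
          (I n ω, πhat n ω) st →
        (∀ st', ¬ StepSparse (G n) ω (γ1 n * ((n : ℝ) - 2) * qu n ^ 2) st st') →
        st.1 = Finset.univ ∧ st.2 = ⇑(πs n)})
      atTop (nhds (1 : ENNReal)) := by
  classical
  -- ε ≤ 2, using the model at n = 2
  have hε2 : ε ≤ 2 := by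
    have hnd : ¬ ((s(0,1) : Sym2 (Fin 2)).IsDiag) := by decide
    have hle : qu 2^2 + ρu 2*qu 2*(1-qu 2) ≤ 1 := by
      haveI := (hmodel 2).1
      rw [← ENNReal.ofReal_le_one, ← ((hmodel 2).2.1 _ hnd).2.2.2.2.1]
      exact prob_le_one
    have h22 := h2 2
    rw [show ((2:ℕ):ℝ) = 2 by norm_num] at h22
    have hlog2 : (0.6931471803:ℝ) < Real.log 2 := Real.log_two_gt_d9
    nlinarith [mul_le_mul_of_nonneg_left (le_of_lt hlog2) (show (0:ℝ) ≤ 1+ε by linarith)]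
  set K := max (16*Cc ε) (8*Cc ε*(Rs ε)^2) with hK
  have hlogT : Tendsto (fun n:ℕ => Real.log n) atTop atTop :=
    Real.tendsto_log_atTop.comp tendsto_natCast_atTop_atTop
  -- eventual facts
  have ev3 : ∀ᶠ n:ℕ in atTop, Real.exp (-(ε/4)*Real.log n) ≤ 1/2 := by
    filter_upwards [hlogT.eventually_ge_atTop ((4/ε)*Real.log 2)] with n hn
    have h1' : -(ε/4)*Real.log n ≤ -Real.log 2 := by
      have h2' := mul_le_mul_of_nonneg_left hn (show (0:ℝ) ≤ ε/4 by positivity)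
      have h3' : (ε/4)*((4/ε)*Real.log 2) = Real.log 2 := by field_simp
      nlinarith
    calc Real.exp (-(ε/4)*Real.log n) ≤ Real.exp (-Real.log 2) := Real.exp_le_exp.mpr h1'
      _ = 1/2 := by rw [Real.exp_neg, Real.exp_log (by norm_num : (0:ℝ) < 2)]; norm_num
  have ev4 : ∀ᶠ n:ℕ in atTop, K * Real.log n ≤ (n:ℝ)*ρu n^2 := by
    filter_upwards [h1.eventually_ge_atTop K, hlogT.eventually_gt_atTop 0] with n hK' hlog
    rw [le_div_iff₀ hlog] at hK'
    linarith
  have hlower : ∀ᶠ n:ℕ in atTop,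
      1 - (ENNReal.ofReal ((n:ℝ)⁻¹) + ENNReal.ofReal (2 * Real.exp (-(ε/4) * Real.log n)))
      ≤ P n {ω | ∀ st : Finset (Fin n) × (Fin n → Fin n),
        Relation.ReflTransGen (StepSparse (G n) ω (γ1 n * ((n : ℝ) - 2) * qu n ^ 2))
          (I n ω, πhat n ω) st →
        (∀ st', ¬ StepSparse (G n) ω (γ1 n * ((n : ℝ) - 2) * qu n ^ 2) st st') →
        st.1 = Finset.univ ∧ st.2 = ⇑(πs n)} := by
    filter_upwards [eventually_ge_atTop 4, hlogT.eventually_ge_atTop 1, ev3, ev4] with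
      n h4 hL1 hhalf hWn
    have hγn := hγ n (by omega)
    exact main_n ε hε hε2 (G n) (P n) (πs n) (qu n) (ρu n) (qa n) (ρa n) (hmodel n)
      h4 hL1 hhalf hWn (h2 n) (h3 n) (γ1 n) hγn.1 hγn.2 (I n) (πhat n) (hI n)
  -- convergence of the lower bound
  have hb1 : Tendsto (fun n:ℕ => ENNReal.ofReal ((n:ℝ)⁻¹)) atTop (nhds 0) := by
    have h0 : Tendsto (fun n:ℕ => ((n:ℝ))⁻¹) atTop (nhds 0) :=
      tendsto_inv_atTop_zero.comp tendsto_natCast_atTop_atTop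
    have := ENNReal.tendsto_ofReal h0
    simpa using this
  have hb2 : Tendsto (fun n:ℕ => ENNReal.ofReal (2 * Real.exp (-(ε/4) * Real.log n)))
      atTop (nhds 0) := by
    have hbot : Tendsto (fun n:ℕ => -(ε/4)*Real.log n) atTop atBot := by
      have := hlogT.const_mul_atTop (show (0:ℝ) < ε/4 by positivity)
      have h2' : Tendsto (fun x:ℝ => -x) atTop atBot := tendsto_neg_atTop_atBot
      have h3' := h2'.comp this
      refine h3'.congr (fun n => by simp only [Function.comp_apply]; ring)
    have hexp : Tendsto (fun n:ℕ => Real.exp (-(ε/4)*Real.log n)) atTop (nhds 0) :=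
      Real.tendsto_exp_atBot.comp hbot
    have h2x : Tendsto (fun n:ℕ => 2 * Real.exp (-(ε/4)*Real.log n)) atTop (nhds 0) := by
      have := hexp.const_mul (2:ℝ)
      simpa using this
    have := ENNReal.tendsto_ofReal h2x
    simpa using this
  have hsum : Tendsto (fun n:ℕ => ENNReal.ofReal ((n:ℝ)⁻¹)
      + ENNReal.ofReal (2 * Real.exp (-(ε/4) * Real.log n))) atTop (nhds 0) := by
    have := hb1.add hb2
    simpa using this
  have hg : Tendsto (fun n:ℕ => 1 - (ENNReal.ofReal ((n:ℝ)⁻¹)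
      + ENNReal.ofReal (2 * Real.exp (-(ε/4) * Real.log n)))) atTop (nhds 1) := by
    have hc : Continuous (fun x : ℝ≥0∞ => 1 - x) :=
      ENNReal.continuous_sub_left (by norm_num)
    have := (hc.tendsto 0).comp hsum
    simpa [Function.comp_def] using this
  refine tendsto_of_tendsto_of_tendsto_of_le_of_le' hg tendsto_const_nhds hlower ?_
  filter_upwards with n
  haveI := (hmodel n).1
  exact prob_le_one
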